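/- Assume the F-expectation satisfies (H0)–(H7) and let {X(τ):τ∈S_0} be a CE admissible family with sup_{τ∈S_0} E[X(τ)] < ∞, with value function v. Then for every S∈S_0 and every λ∈(0,1), the stopping time τ^λ(S)=essinf{τ∈S_S: λ v(τ) ≤ X(τ) a.s.} satisfies λ E[v(S)] ≤ E[X(τ^λ(S))]. -/

import Mathlib

open MeasureTheory Filter Set

noncomputable section

namespace OptMultStop

variable {Ω : Type*}

/-- A real function is right-continuous with left limits (RCLL) on `[0, T]`. -/
def RCLLOn (f : ℝ → ℝ) (T : ℝ) : Prop :=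
  (∀ t ∈ Set.Ico (0 : ℝ) T, ContinuousWithinAt f (Set.Ici t) t) ∧
    ∀ t ∈ Set.Ioc (0 : ℝ) T, ∃ l : ℝ, Filter.Tendsto f (nhdsWithin t (Set.Iio t)) (nhds l)

/-- A real function is right-continuous on `[0, T)`. -/
def RCOn (f : ℝ → ℝ) (T : ℝ) : Prop :=
  ∀ t ∈ Set.Ico (0 : ℝ) T, ContinuousWithinAt f (Set.Ici t) t

/-- `τ` is a stopping time for `ℱ` taking values in `[s ·, T]`; for `s = S` a stopping
time this encodes membership in `S_S`. -/
def IsStopIn [m : MeasurableSpace Ω] (ℱ : Filtration ℝ m) (T : ℝ) (s τ : Ω → ℝ) : Prop :=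
  IsStoppingTime ℱ (fun ω => (τ ω : WithTop ℝ)) ∧ (∀ ω, s ω ≤ τ ω) ∧ ∀ ω, τ ω ≤ T

/-- Membership in `S_0`: a stopping time with values in `[0, T]`. -/
def Stop0 [m : MeasurableSpace Ω] (ℱ : Filtration ℝ m) (T : ℝ) (τ : Ω → ℝ) : Prop :=
  IsStopIn ℱ T (fun _ => (0 : ℝ)) τ

/-- `g` is an essential supremum of the family of random variables `s`. -/
def IsEssSupFam [MeasurableSpace Ω] (μ : Measure Ω) (s : Set (Ω → ℝ)) (g : Ω → ℝ) : Prop :=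
  (∀ f ∈ s, f ≤ᵐ[μ] g) ∧ ∀ h : Ω → ℝ, (∀ f ∈ s, f ≤ᵐ[μ] h) → g ≤ᵐ[μ] h

/-- `g` is an essential infimum of the family of random variables `s`. -/
def IsEssInfFam [MeasurableSpace Ω] (μ : Measure Ω) (s : Set (Ω → ℝ)) (g : Ω → ℝ) : Prop :=
  (∀ f ∈ s, g ≤ᵐ[μ] f) ∧ ∀ h : Ω → ℝ, (∀ f ∈ s, h ≤ᵐ[μ] f) → h ≤ᵐ[μ] g

/-- An `𝔽`-consistent nonlinear expectation `(E, Dom(E))` on the horizon `[0, T]`,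
together with its conditional versions at stopping times, satisfying the domain
axioms (D1)-(D3), (A1)-(A4) at stopping times, and hypotheses (H0)-(H5). -/
structure FExp [m : MeasurableSpace Ω] (μ : Measure Ω) (T : ℝ) (ℱ : Filtration ℝ m) where
  /-- the domain `Dom(E)` -/
  Dom : Set (Ω → ℝ)
  /-- `cond τ ξ` is the conditional expectation `E_τ[ξ]` at the stopping time `τ` -/
  cond : (Ω → ℝ) → (Ω → ℝ) → Ω → ℝ
  /-- `E0 ξ` is the (deterministic) value `E[ξ] = E_0[ξ]` -/
  E0 : (Ω → ℝ) → ℝ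
  zero_mem : (fun _ => (0 : ℝ)) ∈ Dom
  one_mem : (fun _ => (1 : ℝ)) ∈ Dom
  /-- (H4): all constants belong to the domain -/
  const_mem : ∀ c : ℝ, (fun _ => c) ∈ Dom
  add_mem : ∀ {ξ η : Ω → ℝ}, ξ ∈ Dom → η ∈ Dom → ξ + η ∈ Dom
  indicator_mem : ∀ {ξ : Ω → ℝ}, ξ ∈ Dom → ∀ {A : Set Ω}, MeasurableSet A →
    A.indicator ξ ∈ Dom
  sandwich_mem : ∀ {ξ η : Ω → ℝ}, η ∈ Dom → (∀ᵐ ω ∂μ, 0 ≤ ξ ω ∧ ξ ω ≤ η ω) → ξ ∈ Dom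
  cond_mem : ∀ {τ ξ : Ω → ℝ}, Stop0 ℱ T τ → ξ ∈ Dom → 0 ≤ᵐ[μ] ξ → cond τ ξ ∈ Dom
  cond_nonneg : ∀ {τ ξ : Ω → ℝ}, Stop0 ℱ T τ → ξ ∈ Dom → 0 ≤ᵐ[μ] ξ → 0 ≤ᵐ[μ] cond τ ξ
  /-- `E_τ[ξ]` is `F_τ`-measurable -/
  cond_adapted : ∀ {τ ξ : Ω → ℝ} (hτ : Stop0 ℱ T τ), ξ ∈ Dom → 0 ≤ᵐ[μ] ξ →
    Measurable[hτ.1.measurableSpace] (cond τ ξ)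
  /-- monotonicity -/
  mono : ∀ {τ ξ η : Ω → ℝ}, Stop0 ℱ T τ → ξ ∈ Dom → 0 ≤ᵐ[μ] ξ → η ∈ Dom → 0 ≤ᵐ[μ] η →
    ξ ≤ᵐ[μ] η → cond τ ξ ≤ᵐ[μ] cond τ η
  /-- strict monotonicity -/
  strict_mono : ∀ {τ ξ η : Ω → ℝ}, Stop0 ℱ T τ → ξ ∈ Dom → 0 ≤ᵐ[μ] ξ → η ∈ Dom →
    0 ≤ᵐ[μ] η → ξ ≤ᵐ[μ] η → cond τ ξ =ᵐ[μ] cond τ η → ξ =ᵐ[μ] η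
  /-- time consistency -/
  time_consistent : ∀ {σ τ ξ : Ω → ℝ}, Stop0 ℱ T σ → Stop0 ℱ T τ → (∀ ω, σ ω ≤ τ ω) →
    ξ ∈ Dom → 0 ≤ᵐ[μ] ξ → cond σ (cond τ ξ) =ᵐ[μ] cond σ ξ
  /-- zero-one law -/
  zero_one : ∀ {τ ξ : Ω → ℝ} (hτ : Stop0 ℱ T τ), ξ ∈ Dom → 0 ≤ᵐ[μ] ξ →
    ∀ {A : Set Ω}, MeasurableSet[hτ.1.measurableSpace] A →
    cond τ (A.indicator ξ) =ᵐ[μ] A.indicator (cond τ ξ)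
  /-- translation invariance -/
  translation : ∀ {τ ξ η : Ω → ℝ} (hτ : Stop0 ℱ T τ), ξ ∈ Dom → 0 ≤ᵐ[μ] ξ → η ∈ Dom →
    0 ≤ᵐ[μ] η → Measurable[hτ.1.measurableSpace] η → cond τ (ξ + η) =ᵐ[μ] cond τ ξ + η
  /-- `F_0` is trivial: `E_0[ξ]` is the constant `E0 ξ` -/
  E0_eq : ∀ {ξ : Ω → ℝ}, ξ ∈ Dom → 0 ≤ᵐ[μ] ξ →
    cond (fun _ => (0 : ℝ)) ξ =ᵐ[μ] fun _ => E0 ξ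
  /-- the process `t ↦ E_t[ξ]` has RCLL paths -/
  rcll_paths : ∀ {ξ : Ω → ℝ}, ξ ∈ Dom → 0 ≤ᵐ[μ] ξ →
    ∀ᵐ ω ∂μ, RCLLOn (fun t => cond (fun _ => t) ξ ω) T
  /-- (H0) -/
  h0 : ∀ {A : Set Ω}, MeasurableSet A → 0 < μ A →
    Tendsto (fun n : ℕ => E0 (A.indicator fun _ => (n : ℝ))) atTop atTop
  /-- (H1) -/
  h1 : ∀ {ξ : Ω → ℝ}, ξ ∈ Dom → 0 ≤ᵐ[μ] ξ → ∀ {A : ℕ → Set Ω},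
    (∀ n, MeasurableSet (A n)) → Monotone A → (∀ᵐ ω ∂μ, ω ∈ ⋃ n, A n) →
    Tendsto (fun n => E0 ((A n).indicator ξ)) atTop (nhds (E0 ξ))
  /-- (H2) -/
  h2 : ∀ {ξ η : Ω → ℝ}, ξ ∈ Dom → 0 ≤ᵐ[μ] ξ → η ∈ Dom → 0 ≤ᵐ[μ] η →
    ∀ {A : ℕ → Set Ω}, (∀ n, MeasurableSet (A n)) → Antitone A →
    (∀ᵐ ω ∂μ, ω ∉ ⋂ n, A n) →
    Tendsto (fun n => E0 (ξ + (A n).indicator η)) atTop (nhds (E0 ξ))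
  /-- (H5) -/
  h5 : ∀ {ξ : ℕ → Ω → ℝ} {ζ : Ω → ℝ}, (∀ n, ξ n ∈ Dom) → (∀ n, 0 ≤ᵐ[μ] ξ n) →
    (∀ᵐ ω ∂μ, Tendsto (fun n => ξ n ω) atTop (nhds (ζ ω))) →
    (∃ C : ℝ, ∃ᶠ n in atTop, E0 (ξ n) ≤ C) → ζ ∈ Dom

variable [m : MeasurableSpace Ω] {μ : Measure Ω} {T : ℝ} {ℱ : Filtration ℝ m}

/-- (H6): sub-additivity. -/
def FExp.Subadditive (𝔈 : FExp μ T ℱ) : Prop :=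
  ∀ ⦃τ ξ η : Ω → ℝ⦄, Stop0 ℱ T τ → ξ ∈ 𝔈.Dom → 0 ≤ᵐ[μ] ξ → η ∈ 𝔈.Dom → 0 ≤ᵐ[μ] η →
    𝔈.cond τ (ξ + η) ≤ᵐ[μ] 𝔈.cond τ ξ + 𝔈.cond τ η

/-- (H7): positive homogeneity. -/
def FExp.PosHom (𝔈 : FExp μ T ℱ) : Prop :=
  ∀ ⦃τ ξ : Ω → ℝ⦄ (l : ℝ), 0 ≤ l → Stop0 ℱ T τ → ξ ∈ 𝔈.Dom → 0 ≤ᵐ[μ] ξ →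
    𝔈.cond τ (fun ω => l * ξ ω) =ᵐ[μ] fun ω => l * 𝔈.cond τ ξ ω

/-- Admissible family of rewards indexed by stopping times. -/
def Admissible (𝔈 : FExp μ T ℱ) (X : (Ω → ℝ) → Ω → ℝ) : Prop :=
  (∀ τ : Ω → ℝ, ∀ hτ : Stop0 ℱ T τ, X τ ∈ 𝔈.Dom ∧ 0 ≤ᵐ[μ] X τ ∧
      Measurable[hτ.1.measurableSpace] (X τ)) ∧
    ∀ τ σ : Ω → ℝ, Stop0 ℱ T τ → Stop0 ℱ T σ →
      ∀ᵐ ω ∂μ, τ ω = σ ω → X τ ω = X σ ω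

/-- `sup_{τ ∈ S_0} E[X(τ)] < ∞`. -/
def BddRewardE0 (𝔈 : FExp μ T ℱ) (X : (Ω → ℝ) → Ω → ℝ) : Prop :=
  ∃ C : ℝ, ∀ τ : Ω → ℝ, Stop0 ℱ T τ → 𝔈.E0 (X τ) ≤ C

/-- `v` is the value function family of the single stopping problem for the reward `X`:
`v(S) = esssup_{τ ∈ S_S} E_S[X(τ)]`. -/
def IsValueFam (𝔈 : FExp μ T ℱ) (X v : (Ω → ℝ) → Ω → ℝ) : Prop :=
  ∀ S : Ω → ℝ, Stop0 ℱ T S →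
    IsEssSupFam μ {g | ∃ τ : Ω → ℝ, IsStopIn ℱ T S τ ∧ g = 𝔈.cond S (X τ)} (v S)

/-- An `E`-supermartingale system. -/
def SupermartSys (𝔈 : FExp μ T ℱ) (h : (Ω → ℝ) → Ω → ℝ) : Prop :=
  (∀ τ : Ω → ℝ, ∀ hτ : Stop0 ℱ T τ, h τ ∈ 𝔈.Dom ∧ 0 ≤ᵐ[μ] h τ ∧
      Measurable[hτ.1.measurableSpace] (h τ)) ∧
    ∀ τ σ : Ω → ℝ, Stop0 ℱ T τ → Stop0 ℱ T σ → (∀ᵐ ω ∂μ, τ ω ≤ σ ω) →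
      𝔈.cond τ (h σ) ≤ᵐ[μ] h τ

/-- Right-continuity along stopping times in `E`-expectation (RCE). -/
def RCE (𝔈 : FExp μ T ℱ) (X : (Ω → ℝ) → Ω → ℝ) : Prop :=
  ∀ τ : Ω → ℝ, Stop0 ℱ T τ → ∀ τs : ℕ → Ω → ℝ, (∀ n, Stop0 ℱ T (τs n)) →
    (∀ᵐ ω ∂μ, Antitone (fun n => τs n ω) ∧
      Tendsto (fun n => τs n ω) atTop (nhds (τ ω))) →
    Tendsto (fun n => 𝔈.E0 (X (τs n))) atTop (nhds (𝔈.E0 (X τ)))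

/-- Left-continuity along stopping times in `E`-expectation (LCE). -/
def LCE (𝔈 : FExp μ T ℱ) (X : (Ω → ℝ) → Ω → ℝ) : Prop :=
  ∀ τ : Ω → ℝ, Stop0 ℱ T τ → ∀ τs : ℕ → Ω → ℝ, (∀ n, Stop0 ℱ T (τs n)) →
    (∀ᵐ ω ∂μ, Monotone (fun n => τs n ω) ∧
      Tendsto (fun n => τs n ω) atTop (nhds (τ ω))) →
    Tendsto (fun n => 𝔈.E0 (X (τs n))) atTop (nhds (𝔈.E0 (X τ)))

/-- Continuity along stopping times in `E`-expectation (CE). -/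
def CE (𝔈 : FExp μ T ℱ) (X : (Ω → ℝ) → Ω → ℝ) : Prop :=
  RCE 𝔈 X ∧ LCE 𝔈 X

/-- Right-continuity along stopping times (RC): a.s. pointwise convergence. -/
def RCfam (𝔈 : FExp μ T ℱ) (X : (Ω → ℝ) → Ω → ℝ) : Prop :=
  ∀ τ : Ω → ℝ, Stop0 ℱ T τ → ∀ τs : ℕ → Ω → ℝ, (∀ n, Stop0 ℱ T (τs n)) →
    (∀ᵐ ω ∂μ, Antitone (fun n => τs n ω) ∧
      Tendsto (fun n => τs n ω) atTop (nhds (τ ω))) →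
    ∀ᵐ ω ∂μ, Tendsto (fun n => X (τs n) ω) atTop (nhds (X τ ω))

/-- Biadmissible family of rewards indexed by pairs of stopping times. -/
def Biadmissible (𝔈 : FExp μ T ℱ) (X : (Ω → ℝ) → (Ω → ℝ) → Ω → ℝ) : Prop :=
  (∀ τ σ : Ω → ℝ, ∀ hτ : Stop0 ℱ T τ, ∀ hσ : Stop0 ℱ T σ,
      X τ σ ∈ 𝔈.Dom ∧ 0 ≤ᵐ[μ] X τ σ ∧
      Measurable[(hτ.1.max hσ.1).measurableSpace] (X τ σ)) ∧
    ∀ τ σ τ' σ' : Ω → ℝ, Stop0 ℱ T τ → Stop0 ℱ T σ → Stop0 ℱ T τ' → Stop0 ℱ T σ' →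
      ∀ᵐ ω ∂μ, τ ω = τ' ω → σ ω = σ' ω → X τ σ ω = X τ' σ' ω

/-- `sup_{τ,σ ∈ S_0} E[X(τ,σ)] < ∞`. -/
def BddReward2E0 (𝔈 : FExp μ T ℱ) (X : (Ω → ℝ) → (Ω → ℝ) → Ω → ℝ) : Prop :=
  ∃ C : ℝ, ∀ τ σ : Ω → ℝ, Stop0 ℱ T τ → Stop0 ℱ T σ → 𝔈.E0 (X τ σ) ≤ C

/-- `v` is the value function family of the double stopping problem:
`v(S) = esssup_{τ₁,τ₂ ∈ S_S} E_S[X(τ₁,τ₂)]`. -/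
def IsValueFam2 (𝔈 : FExp μ T ℱ) (X : (Ω → ℝ) → (Ω → ℝ) → Ω → ℝ)
    (v : (Ω → ℝ) → Ω → ℝ) : Prop :=
  ∀ S : Ω → ℝ, Stop0 ℱ T S →
    IsEssSupFam μ
      {g | ∃ τ₁ τ₂ : Ω → ℝ, IsStopIn ℱ T S τ₁ ∧ IsStopIn ℱ T S τ₂ ∧
        g = 𝔈.cond S (X τ₁ τ₂)} (v S)

/-- `u₁(θ) = esssup_{τ₁ ∈ S_θ} E_θ[X(τ₁, θ)]`. -/
def IsU1 (𝔈 : FExp μ T ℱ) (X : (Ω → ℝ) → (Ω → ℝ) → Ω → ℝ) (u₁ : (Ω → ℝ) → Ω → ℝ) : Prop :=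
  ∀ θ : Ω → ℝ, Stop0 ℱ T θ →
    IsEssSupFam μ {g | ∃ τ : Ω → ℝ, IsStopIn ℱ T θ τ ∧ g = 𝔈.cond θ (X τ θ)} (u₁ θ)

/-- `u₂(θ) = esssup_{τ₂ ∈ S_θ} E_θ[X(θ, τ₂)]`. -/
def IsU2 (𝔈 : FExp μ T ℱ) (X : (Ω → ℝ) → (Ω → ℝ) → Ω → ℝ) (u₂ : (Ω → ℝ) → Ω → ℝ) : Prop :=
  ∀ θ : Ω → ℝ, Stop0 ℱ T θ →
    IsEssSupFam μ {g | ∃ τ : Ω → ℝ, IsStopIn ℱ T θ τ ∧ g = 𝔈.cond θ (X θ τ)} (u₂ θ)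

/-- Uniform right-continuity of a biadmissible family along stopping times in
`ℰ`-expectation (URCℰ). -/
def URCE2 (ℰ : FExp μ T ℱ) (X : (Ω → ℝ) → (Ω → ℝ) → Ω → ℝ) : Prop :=
  ∀ σ : Ω → ℝ, Stop0 ℱ T σ → ∀ σs : ℕ → Ω → ℝ, (∀ n, Stop0 ℱ T (σs n)) →
    (∀ᵐ ω ∂μ, Antitone (fun n => σs n ω) ∧
      Tendsto (fun n => σs n ω) atTop (nhds (σ ω))) →
    ∀ ε : ℝ, 0 < ε → ∃ N : ℕ, ∀ n ≥ N, ∀ τ : Ω → ℝ, Stop0 ℱ T τ →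
      ℰ.E0 (fun ω => |X τ σ ω - X τ (σs n) ω|) ≤ ε ∧
      ℰ.E0 (fun ω => |X σ τ ω - X (σs n) τ ω|) ≤ ε

/-- Uniform left-continuity of a biadmissible family along stopping times in
`ℰ`-expectation (ULCℰ). -/
def ULCE2 (ℰ : FExp μ T ℱ) (X : (Ω → ℝ) → (Ω → ℝ) → Ω → ℝ) : Prop :=
  ∀ σ : Ω → ℝ, Stop0 ℱ T σ → ∀ σs : ℕ → Ω → ℝ, (∀ n, Stop0 ℱ T (σs n)) →
    (∀ᵐ ω ∂μ, Monotone (fun n => σs n ω) ∧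
      Tendsto (fun n => σs n ω) atTop (nhds (σ ω))) →
    ∀ ε : ℝ, 0 < ε → ∃ N : ℕ, ∀ n ≥ N, ∀ τ : Ω → ℝ, Stop0 ℱ T τ →
      ℰ.E0 (fun ω => |X τ σ ω - X τ (σs n) ω|) ≤ ε ∧
      ℰ.E0 (fun ω => |X σ τ ω - X (σs n) τ ω|) ≤ ε

/-- Uniform continuity (UCℰ) of a biadmissible family. -/
def UCE2 (ℰ : FExp μ T ℱ) (X : (Ω → ℝ) → (Ω → ℝ) → Ω → ℝ) : Prop :=
  URCE2 ℰ X ∧ ULCE2 ℰ X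

/-- `(E, Dom(E))` is dominated by `(Ẽ, Dom(Ẽ))`. -/
def Dominated (𝔈 𝔉 : FExp μ T ℱ) : Prop :=
  𝔈.Dom ⊆ 𝔉.Dom ∧
    ∀ τ : Ω → ℝ, Stop0 ℱ T τ → ∀ ξ η : Ω → ℝ, ξ ∈ 𝔈.Dom → η ∈ 𝔈.Dom →
      ∀ᵐ ω ∂μ, 𝔈.cond τ (ξ + η) ω - 𝔈.cond τ η ω ≤ 𝔉.cond τ ξ ω

/-- The filtration contains all `μ`-null sets (part of the usual conditions). -/
def CompleteFiltration (μ : Measure Ω) (ℱ : Filtration ℝ m) : Prop :=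
  ∀ s : Set Ω, μ s = 0 → ∀ t : ℝ, MeasurableSet[ℱ t] s

/-- The filtration is right-continuous (part of the usual conditions). -/
def RightContinuousFiltration (ℱ : Filtration ℝ m) : Prop :=
  ∀ t : ℝ, (ℱ t : MeasurableSpace Ω) = ⨅ u ∈ Set.Ioi t, ℱ u

/-- A `d`-tuple of stopping times, all in `S_s`. -/
def StopVec (ℱ : Filtration ℝ m) (T : ℝ) (s : Ω → ℝ) {d : ℕ} (τ : Fin d → Ω → ℝ) : Prop :=
  ∀ i, IsStopIn ℱ T s (τ i)

/-- A `d`-admissible family of rewards. -/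
def DAdmissible (𝔈 : FExp μ T ℱ) {d : ℕ} (X : (Fin d → Ω → ℝ) → Ω → ℝ) : Prop :=
  (∀ τ : Fin d → Ω → ℝ, StopVec ℱ T (fun _ => (0 : ℝ)) τ →
      X τ ∈ 𝔈.Dom ∧ 0 ≤ᵐ[μ] X τ ∧
      ∀ h : IsStoppingTime ℱ fun ω => (((⨆ i, τ i ω : ℝ)) : WithTop ℝ),
        Measurable[h.measurableSpace] (X τ)) ∧
    ∀ τ σ : Fin d → Ω → ℝ, StopVec ℱ T (fun _ => (0 : ℝ)) τ →
      StopVec ℱ T (fun _ => (0 : ℝ)) σ →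
      ∀ᵐ ω ∂μ, (∀ i, τ i ω = σ i ω) → X τ ω = X σ ω

/-- `sup_{τ ∈ S_0^d} E[X(τ)] < ∞`. -/
def BddRewardDE0 (𝔈 : FExp μ T ℱ) {d : ℕ} (X : (Fin d → Ω → ℝ) → Ω → ℝ) : Prop :=
  ∃ C : ℝ, ∀ τ : Fin d → Ω → ℝ, StopVec ℱ T (fun _ => (0 : ℝ)) τ → 𝔈.E0 (X τ) ≤ C

/-- `v` is the value function family of the `d`-stopping problem:
`v(S) = esssup_{τ ∈ S_S^d} E_S[X(τ)]`. -/
def IsValueFamD (𝔈 : FExp μ T ℱ) {d : ℕ} (X : (Fin d → Ω → ℝ) → Ω → ℝ)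
    (v : (Ω → ℝ) → Ω → ℝ) : Prop :=
  ∀ S : Ω → ℝ, Stop0 ℱ T S →
    IsEssSupFam μ
      {g | ∃ τ : Fin d → Ω → ℝ, StopVec ℱ T S τ ∧ g = 𝔈.cond S (X τ)} (v S)

/-- `u^{(i)}(θ) = esssup_{τ ∈ S_θ^{d-1}} E_θ[X^{(i)}(τ, θ)]`, where `X^{(i)}(τ, θ)`
inserts `θ` in the `i`-th slot. -/
def IsUi (𝔈 : FExp μ T ℱ) {d : ℕ} (X : (Fin (d + 1) → Ω → ℝ) → Ω → ℝ)
    (ui : Fin (d + 1) → (Ω → ℝ) → Ω → ℝ) : Prop :=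
  ∀ i : Fin (d + 1), ∀ θ : Ω → ℝ, Stop0 ℱ T θ →
    IsEssSupFam μ
      {g | ∃ τ : Fin d → Ω → ℝ, StopVec ℱ T θ τ ∧ g = 𝔈.cond θ (X (i.insertNth θ τ))}
      (ui i θ)

/-- Uniform continuity (UCE) of a `d`-admissible family along monotone sequences of
stopping times. -/
def UCED (𝔈 : FExp μ T ℱ) {d : ℕ} (X : (Fin (d + 1) → Ω → ℝ) → Ω → ℝ) : Prop :=
  ∀ i : Fin (d + 1), ∀ S : Ω → ℝ, Stop0 ℱ T S → ∀ Ss : ℕ → Ω → ℝ,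
    (∀ n, Stop0 ℱ T (Ss n)) →
    ((∀ᵐ ω ∂μ, Monotone fun n => Ss n ω) ∨ (∀ᵐ ω ∂μ, Antitone fun n => Ss n ω)) →
    (∀ᵐ ω ∂μ, Tendsto (fun n => Ss n ω) atTop (nhds (S ω))) →
    ∀ ε : ℝ, 0 < ε → ∃ N : ℕ, ∀ n ≥ N, ∀ θ : Fin d → Ω → ℝ,
      StopVec ℱ T (fun _ => (0 : ℝ)) θ →
      𝔈.E0 (fun ω => |X (i.insertNth (Ss n) θ) ω - X (i.insertNth S θ) ω|) ≤ ε


section AuxLemmas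

open Real

attribute [local instance] Classical.propDecidable

variable [IsProbabilityMeasure μ] {𝔈 : FExp μ T ℱ}

/-! ### Elementary facts -/

lemma ae_const_le {a b : ℝ} (h : (fun _ : Ω => a) ≤ᵐ[μ] fun _ => b) : a ≤ b := by
  obtain ⟨ω, hω⟩ := h.exists
  exact hω

lemma ae_const_eq {a b : ℝ} (h : (fun _ : Ω => a) =ᵐ[μ] fun _ => b) : a = b :=
  le_antisymm (ae_const_le h.le) (ae_const_le h.symm.le)

lemma st_min {τ σ : Ω → ℝ} (hτ : IsStoppingTime ℱ (fun ω => (τ ω : WithTop ℝ)))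
    (hσ : IsStoppingTime ℱ (fun ω => (σ ω : WithTop ℝ))) :
    IsStoppingTime ℱ (fun ω => ((min (τ ω) (σ ω) : ℝ) : WithTop ℝ)) := hτ.min hσ

lemma st_max {τ σ : Ω → ℝ} (hτ : IsStoppingTime ℱ (fun ω => (τ ω : WithTop ℝ)))
    (hσ : IsStoppingTime ℱ (fun ω => (σ ω : WithTop ℝ))) :
    IsStoppingTime ℱ (fun ω => ((max (τ ω) (σ ω) : ℝ) : WithTop ℝ)) := hτ.max hσ

lemma ms_congr {f g : Ω → WithTop ℝ} (hf : IsStoppingTime ℱ f) (hg : IsStoppingTime ℱ g)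
    (h : f = g) : hf.measurableSpace = hg.measurableSpace := by
  subst h; rfl

lemma st_le {τ : Ω → ℝ} (hτ : IsStoppingTime ℱ (fun ω => (τ ω : WithTop ℝ))) (t : ℝ) :
    MeasurableSet[ℱ t] {ω | τ ω ≤ t} := by
  simpa using hτ t

lemma st_ms_iff {τ : Ω → ℝ} (hτ : IsStoppingTime ℱ (fun ω => (τ ω : WithTop ℝ))) (s : Set Ω) :
    MeasurableSet[hτ.measurableSpace] s ↔
      MeasurableSet[⨆ t, ℱ t] s ∧ ∀ i : ℝ, MeasurableSet[ℱ i] (s ∩ {ω | τ ω ≤ i}) := by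
  rw [hτ.measurableSet]
  exact ⟨fun h => ⟨h.1, fun i => by simpa using h.2 i⟩,
    fun h => ⟨h.1, fun i => by simpa using h.2 i⟩⟩

lemma stop0_const {c : ℝ} (hc0 : 0 ≤ c) (hcT : c ≤ T) : Stop0 ℱ T (fun _ => c) :=
  ⟨isStoppingTime_const ℱ c, fun _ => hc0, fun _ => hcT⟩

lemma stop0_zero (hT : 0 ≤ T) : Stop0 ℱ T (fun _ => (0 : ℝ)) := stop0_const le_rfl hT

lemma IsStopIn.stop0 {S τ : Ω → ℝ} (hS : Stop0 ℱ T S) (h : IsStopIn ℱ T S τ) :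
    Stop0 ℱ T τ :=
  ⟨h.1, fun ω => (hS.2.1 ω).trans (h.2.1 ω), h.2.2⟩

lemma IsStopIn.refl {τ : Ω → ℝ} (hτ : Stop0 ℱ T τ) : IsStopIn ℱ T τ τ :=
  ⟨hτ.1, fun _ => le_rfl, hτ.2.2⟩

lemma Stop0.ms_le {τ : Ω → ℝ} (hτ : Stop0 ℱ T τ) : hτ.1.measurableSpace ≤ m := by
  intro A hA
  have h1 := ((st_ms_iff hτ.1 A).mp hA).2 T
  have h2 : A ∩ {ω | τ ω ≤ T} = A := by
    ext ω; simp [hτ.2.2 ω]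
  rw [h2] at h1
  exact ℱ.le T A h1

lemma Stop0.meas {τ : Ω → ℝ} (hτ : Stop0 ℱ T τ) : Measurable τ :=
  measurable_of_Iic fun x => by
    have := ℱ.le x _ (st_le hτ.1 x)
    simpa [Set.preimage] using this

lemma null_ms {τ : Ω → ℝ} (hcf : CompleteFiltration μ ℱ) (hτ : IsStoppingTime ℱ (fun ω => (τ ω : WithTop ℝ)))
    {N : Set Ω} (hN : μ N = 0) : MeasurableSet[hτ.measurableSpace] N :=
  (st_ms_iff hτ N).mpr ⟨le_iSup (fun t => (ℱ t : MeasurableSpace Ω)) 0 N (hcf N hN 0),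
    fun t => hcf _ (measure_mono_null Set.inter_subset_left hN) t⟩

/-- a function a.e. equal to a stopping time is a stopping time (complete filtration). -/
lemma stop_of_ae_eq (hcf : CompleteFiltration μ ℱ) {τ σ : Ω → ℝ}
    (hσ : IsStoppingTime ℱ (fun ω => (σ ω : WithTop ℝ))) (h : τ =ᵐ[μ] σ) :
    IsStoppingTime ℱ (fun ω => (τ ω : WithTop ℝ)) := by
  have hN : μ {ω | τ ω ≠ σ ω} = 0 := by
    simpa [Filter.EventuallyEq, ae_iff] using h
  intro t
  simp only [WithTop.coe_le_coe]
  have : {ω | τ ω ≤ t} = ({ω | σ ω ≤ t} \ {ω | τ ω ≠ σ ω}) ∪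
      ({ω | τ ω ≤ t} ∩ {ω | τ ω ≠ σ ω}) := by
    ext ω; by_cases hω : τ ω = σ ω
    · simp only [Set.mem_union, Set.mem_diff, Set.mem_inter_iff, Set.mem_setOf_eq, hω]
      tauto
    · simp only [Set.mem_union, Set.mem_diff, Set.mem_inter_iff, Set.mem_setOf_eq, hω]
      tauto
  rw [this]
  exact ((st_le hσ t).diff (hcf _ hN t)).union
    (hcf _ (measure_mono_null Set.inter_subset_right hN) t)

/-- gluing two stopping times over a set measurable at an earlier stopping time. -/
lemma glue_stop {θ ρ₁ ρ₂ : Ω → ℝ} (hθ : IsStoppingTime ℱ (fun ω => (θ ω : WithTop ℝ)))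
    (h₁ : IsStoppingTime ℱ (fun ω => (ρ₁ ω : WithTop ℝ)))
    (h₂ : IsStoppingTime ℱ (fun ω => (ρ₂ ω : WithTop ℝ)))
    (hle₁ : ∀ ω, θ ω ≤ ρ₁ ω) (hle₂ : ∀ ω, θ ω ≤ ρ₂ ω) {C : Set Ω}
    (hC : MeasurableSet[hθ.measurableSpace] C) :
    IsStoppingTime ℱ (fun ω => (C.piecewise ρ₁ ρ₂ ω : WithTop ℝ)) := by
  intro t
  simp only [WithTop.coe_le_coe]
  have heq : {ω | C.piecewise ρ₁ ρ₂ ω ≤ t}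
      = ((C ∩ {ω | θ ω ≤ t}) ∩ {ω | ρ₁ ω ≤ t}) ∪
        ((Cᶜ ∩ {ω | θ ω ≤ t}) ∩ {ω | ρ₂ ω ≤ t}) := by
    ext ω; by_cases h : ω ∈ C
    · simp only [Set.piecewise, h, if_true, Set.mem_union, Set.mem_inter_iff,
        Set.mem_compl_iff, Set.mem_setOf_eq]
      constructor
      · intro hh; exact Or.inl ⟨⟨trivial, (hle₁ ω).trans hh⟩, hh⟩
      · tauto
    · simp only [Set.piecewise, h, if_false, Set.mem_union, Set.mem_inter_iff,
        Set.mem_compl_iff, Set.mem_setOf_eq]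
      constructor
      · intro hh
        refine Or.inr ⟨⟨?_, (hle₂ ω).trans hh⟩, hh⟩
        simp
      · tauto
  rw [heq]
  exact ((((st_ms_iff hθ C).mp hC).2 t).inter (st_le h₁ t)).union
    ((((st_ms_iff hθ Cᶜ).mp hC.compl).2 t).inter (st_le h₂ t))

/-- the pointwise infimum of an antitone sequence of stopping times is a stopping
time, for a right-continuous filtration. -/
lemma inf_stop (hrcf : RightContinuousFiltration ℱ) {τs : ℕ → Ω → ℝ}
    (hstop : ∀ n, IsStoppingTime ℱ (fun ω => (τs n ω : WithTop ℝ))) (hbd : ∀ n ω, 0 ≤ τs n ω) :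
    IsStoppingTime ℱ fun ω => ((⨅ n, τs n ω : ℝ) : WithTop ℝ) := by
  have hbdd : ∀ ω, BddBelow (Set.range fun n => τs n ω) := fun ω =>
    ⟨0, by rintro x ⟨n, rfl⟩; exact hbd n ω⟩
  have hlt : ∀ s u : ℝ, s ≤ u → MeasurableSet[ℱ u] {ω | (⨅ n, τs n ω) < s} := by
    intro s u hsu
    have h1 : {ω | (⨅ n, τs n ω) < s} = ⋃ n, ⋃ k : ℕ, {ω | τs n ω ≤ s - 1 / (k + 1)} := by
      ext ω
      simp only [Set.mem_setOf_eq, Set.mem_iUnion]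
      constructor
      · intro h
        obtain ⟨n, hx⟩ := exists_lt_of_ciInf_lt h
        obtain ⟨k, hk⟩ := exists_nat_one_div_lt (sub_pos.mpr hx)
        exact ⟨n, k, by push_cast at hk ⊢; linarith⟩
      · rintro ⟨n, k, hk⟩
        refine lt_of_le_of_lt (ciInf_le (hbdd ω) n) (hk.trans_lt ?_)
        have : (0 : ℝ) < 1 / (k + 1) := by positivity
        linarith
    rw [h1]
    refine MeasurableSet.iUnion fun n => MeasurableSet.iUnion fun k => ?_
    have h2 : (1 : ℝ) / (k + 1) ≥ 0 := by positivity
    exact ℱ.mono (by linarith : s - 1 / (k + 1) ≤ u) _ (st_le (hstop n) (s - 1 / (k + 1)))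
  intro t
  simp only [WithTop.coe_le_coe]
  rw [hrcf t]
  refine MeasurableSpace.measurableSet_iInf.mpr fun u => ?_
  refine MeasurableSpace.measurableSet_iInf.mpr fun hu => ?_
  rw [Set.mem_Ioi] at hu
  have h1 : {ω | (⨅ n, τs n ω) ≤ t} = ⋂ k : ℕ, {ω | (⨅ n, τs n ω) < t + (u - t) / (k + 2)} := by
    ext ω
    simp only [Set.mem_setOf_eq, Set.mem_iInter]
    constructor
    · intro h k
      have : (0 : ℝ) < (u - t) / (k + 2) := by
        have : (0:ℝ) < u - t := by linarith
        positivity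
      linarith
    · intro h
      by_contra hc
      push_neg at hc
      obtain ⟨k, hk⟩ := exists_nat_gt ((u - t) / ((⨅ n, τs n ω) - t))
      have hpos : (0 : ℝ) < (⨅ n, τs n ω) - t := by linarith
      have h2 := h k
      have h3 : (u - t) / ((k : ℝ) + 2) < (⨅ n, τs n ω) - t := by
        rw [div_lt_iff₀ (by positivity)]
        have h4 : u - t < ((k : ℝ)) * ((⨅ n, τs n ω) - t) := by
          rw [← div_lt_iff₀ hpos] at *
          exact hk
        nlinarith [hpos]
      linarith
  rw [h1]
  refine MeasurableSet.iInter fun k => ?_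
  refine hlt _ u ?_
  have h5 : (u - t) / ((k : ℝ) + 2) ≤ (u - t) := by
    rw [div_le_iff₀ (by positivity)]
    nlinarith [hu]
  linarith

/-! ### arctan integral helpers -/

lemma arctan_int {f : Ω → ℝ} (hf : Measurable f) :
    Integrable (fun ω => arctan (f ω)) μ :=
  (integrable_const (π / 2)).mono'
    ((Real.measurable_arctan.comp hf).aestronglyMeasurable)
    (Filter.Eventually.of_forall fun ω => by
      rw [Real.norm_eq_abs, abs_le]
      exact ⟨(Real.neg_pi_div_two_lt_arctan _).le, (Real.arctan_lt_pi_div_two _).le⟩)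

lemma arctan_int_mono {f g : Ω → ℝ} (hf : Measurable f) (hg : Measurable g)
    (h : f ≤ᵐ[μ] g) : ∫ ω, arctan (f ω) ∂μ ≤ ∫ ω, arctan (g ω) ∂μ := by
  refine integral_mono_ae (arctan_int hf) (arctan_int hg) ?_
  filter_upwards [h] with ω h
  exact Real.arctan_strictMono.monotone h

lemma arctan_int_le_pi {f : Ω → ℝ} (hf : Measurable f) :
    ∫ ω, arctan (f ω) ∂μ ≤ π / 2 := by
  calc ∫ ω, arctan (f ω) ∂μ ≤ ∫ _ω, π / 2 ∂μ := by
        refine integral_mono_ae (arctan_int hf) (integrable_const _)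
          (Filter.Eventually.of_forall fun ω => (Real.arctan_lt_pi_div_two _).le)
    _ = π / 2 := by simp
  
lemma ae_eq_of_arctan_int {f g : Ω → ℝ} (hf : Measurable f) (hg : Measurable g)
    (hle : f ≤ᵐ[μ] g) (hint : ∫ ω, arctan (g ω) ∂μ ≤ ∫ ω, arctan (f ω) ∂μ) :
    f =ᵐ[μ] g := by
  have h1 : (0 : Ω → ℝ) ≤ᵐ[μ] fun ω => arctan (g ω) - arctan (f ω) := by
    filter_upwards [hle] with ω h
    simpa using Real.arctan_strictMono.monotone h
  have hint2 : Integrable (fun ω => arctan (g ω) - arctan (f ω)) μ :=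
    (arctan_int hg).sub (arctan_int hf)
  have h2 : ∫ ω, (arctan (g ω) - arctan (f ω)) ∂μ = 0 := by
    have h0 := integral_nonneg_of_ae (μ := μ) h1
    rw [integral_sub (arctan_int hg) (arctan_int hf)] at h0 ⊢
    linarith
  have h3 := (integral_eq_zero_iff_of_nonneg_ae h1 hint2).mp h2
  filter_upwards [h3] with ω h
  have : arctan (g ω) = arctan (f ω) := by
    simp only [Pi.zero_apply] at h
    linarith
  exact (Real.arctan_injective this).symm

/-! ### basic E-calculus -/

lemma cond_zero (h7 : 𝔈.PosHom) {τ : Ω → ℝ} (hτ : Stop0 ℱ T τ) :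
    𝔈.cond τ (fun _ => (0 : ℝ)) =ᵐ[μ] fun _ => (0 : ℝ) := by
  have h := h7 0 le_rfl hτ 𝔈.zero_mem (Filter.Eventually.of_forall fun ω => le_rfl)
  have e1 : (fun ω : Ω => (0 : ℝ) * (fun _ : Ω => (0:ℝ)) ω) = fun _ : Ω => (0:ℝ) := by
    funext ω; simp
  rw [e1] at h
  filter_upwards [h] with ω hω
  simpa using hω

lemma cond_id (h7 : 𝔈.PosHom) {τ ξ : Ω → ℝ} (hτ : Stop0 ℱ T τ) (hd : ξ ∈ 𝔈.Dom)
    (h0 : 0 ≤ᵐ[μ] ξ) (hm : Measurable[hτ.1.measurableSpace] ξ) :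
    𝔈.cond τ ξ =ᵐ[μ] ξ := by
  have h := 𝔈.translation hτ 𝔈.zero_mem (Filter.Eventually.of_forall fun ω => le_rfl) hd h0 hm
  have e : (fun _ : Ω => (0:ℝ)) + ξ = ξ := by funext ω; simp
  rw [e] at h
  have h2 := cond_zero h7 hτ
  filter_upwards [h, h2] with ω h h2
  simp only [Pi.add_apply] at h
  rw [h, h2]
  simp

lemma cond_congr {τ ξ η : Ω → ℝ} (hτ : Stop0 ℱ T τ) (hξ : ξ ∈ 𝔈.Dom) (hξ0 : 0 ≤ᵐ[μ] ξ)
    (hη : η ∈ 𝔈.Dom) (hη0 : 0 ≤ᵐ[μ] η) (h : ξ =ᵐ[μ] η) :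
    𝔈.cond τ ξ =ᵐ[μ] 𝔈.cond τ η := by
  have h1 := 𝔈.mono hτ hξ hξ0 hη hη0 h.le
  have h2 := 𝔈.mono hτ hη hη0 hξ hξ0 h.symm.le
  filter_upwards [h1, h2] with ω h1 h2
  exact le_antisymm h1 h2

lemma smul_mem {c : ℝ} {ξ : Ω → ℝ} (hc0 : 0 ≤ c) (hc1 : c ≤ 1) (hξ : ξ ∈ 𝔈.Dom)
    (hξ0 : 0 ≤ᵐ[μ] ξ) : (fun ω => c * ξ ω) ∈ 𝔈.Dom :=
  𝔈.sandwich_mem hξ (by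
    filter_upwards [hξ0] with ω h
    exact ⟨mul_nonneg hc0 h, by nlinarith [mul_nonneg (sub_nonneg.mpr hc1) h]⟩)

lemma smul_nonneg' {c : ℝ} {ξ : Ω → ℝ} (hc0 : 0 ≤ c) (hξ0 : 0 ≤ᵐ[μ] ξ) :
    0 ≤ᵐ[μ] fun ω => c * ξ ω := by
  filter_upwards [hξ0] with ω h
  exact mul_nonneg hc0 h

lemma ind_nonneg {A : Set Ω} {ξ : Ω → ℝ} (h0 : 0 ≤ᵐ[μ] ξ) :
    0 ≤ᵐ[μ] A.indicator ξ := by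
  filter_upwards [h0] with ω h
  exact Set.indicator_apply_nonneg fun _ => h

lemma E0_mono (hT : 0 < T) {ξ η : Ω → ℝ} (hξ : ξ ∈ 𝔈.Dom) (hξ0 : 0 ≤ᵐ[μ] ξ)
    (hη : η ∈ 𝔈.Dom) (hη0 : 0 ≤ᵐ[μ] η) (h : ξ ≤ᵐ[μ] η) : 𝔈.E0 ξ ≤ 𝔈.E0 η := by
  have h1 := 𝔈.mono (stop0_zero hT.le) hξ hξ0 hη hη0 h
  have h2 := 𝔈.E0_eq hξ hξ0
  have h3 := 𝔈.E0_eq hη hη0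
  refine ae_const_le (μ := μ) ?_
  filter_upwards [h1, h2, h3] with ω h1 h2 h3
  rw [← h2, ← h3]
  exact h1

lemma E0_congr (hT : 0 < T) {ξ η : Ω → ℝ} (hξ : ξ ∈ 𝔈.Dom) (hξ0 : 0 ≤ᵐ[μ] ξ)
    (hη : η ∈ 𝔈.Dom) (hη0 : 0 ≤ᵐ[μ] η) (h : ξ =ᵐ[μ] η) : 𝔈.E0 ξ = 𝔈.E0 η :=
  le_antisymm (E0_mono hT hξ hξ0 hη hη0 h.le) (E0_mono hT hη hη0 hξ hξ0 h.symm.le)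

lemma E0_cond (hT : 0 < T) {σ ξ : Ω → ℝ} (hσ : Stop0 ℱ T σ) (hξ : ξ ∈ 𝔈.Dom)
    (hξ0 : 0 ≤ᵐ[μ] ξ) : 𝔈.E0 (𝔈.cond σ ξ) = 𝔈.E0 ξ := by
  have h1 := 𝔈.time_consistent (stop0_zero hT.le) hσ hσ.2.1 hξ hξ0
  have h2 := 𝔈.E0_eq (𝔈.cond_mem hσ hξ hξ0) (𝔈.cond_nonneg hσ hξ hξ0)
  have h3 := 𝔈.E0_eq hξ hξ0
  refine ae_const_eq (μ := μ) ?_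
  filter_upwards [h1, h2, h3] with ω h1 h2 h3
  rw [← h2, ← h3]
  exact h1

lemma E0_const (hT : 0 < T) (h7 : 𝔈.PosHom) {c : ℝ} (hc : 0 ≤ c) :
    𝔈.E0 (fun _ => c) = c := by
  have h1 := cond_id h7 (stop0_zero hT.le) (𝔈.const_mem c)
    (Filter.Eventually.of_forall fun ω => hc) measurable_const
  have h2 := 𝔈.E0_eq (𝔈.const_mem c) (Filter.Eventually.of_forall fun ω => hc)
  refine (ae_const_eq (μ := μ) ?_).symm
  filter_upwards [h1, h2] with ω h1 h2
  rw [← h2, h1]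

lemma E0_smul (hT : 0 < T) (h7 : 𝔈.PosHom) {c : ℝ} {ξ : Ω → ℝ} (hc : 0 ≤ c)
    (hξ : ξ ∈ 𝔈.Dom) (hξ0 : 0 ≤ᵐ[μ] ξ) (hmem : (fun ω => c * ξ ω) ∈ 𝔈.Dom) :
    𝔈.E0 (fun ω => c * ξ ω) = c * 𝔈.E0 ξ := by
  have h1 := h7 c hc (stop0_zero hT.le) hξ hξ0
  have h2 := 𝔈.E0_eq hmem (smul_nonneg' hc hξ0)
  have h3 := 𝔈.E0_eq hξ hξ0
  refine ae_const_eq (μ := μ) ?_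
  filter_upwards [h1, h2, h3] with ω h1 h2 h3
  rw [← h2, h1, h3]

lemma E0_subadd (hT : 0 < T) (h6 : 𝔈.Subadditive) {ξ η : Ω → ℝ} (hξ : ξ ∈ 𝔈.Dom)
    (hξ0 : 0 ≤ᵐ[μ] ξ) (hη : η ∈ 𝔈.Dom) (hη0 : 0 ≤ᵐ[μ] η) :
    𝔈.E0 (ξ + η) ≤ 𝔈.E0 ξ + 𝔈.E0 η := by
  have h1 := h6 (stop0_zero hT.le) hξ hξ0 hη hη0
  have h2 := 𝔈.E0_eq (𝔈.add_mem hξ hη) (by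
    filter_upwards [hξ0, hη0] with ω h h'
    exact add_nonneg h h')
  have h3 := 𝔈.E0_eq hξ hξ0
  have h4 := 𝔈.E0_eq hη hη0
  refine ae_const_le (μ := μ) ?_
  filter_upwards [h1, h2, h3, h4] with ω h1 h2 h3 h4
  rw [← h2, ← h3, ← h4]
  exact h1.trans (le_of_eq rfl)

/-! ### localization at stopping times -/

lemma ms_inter_of_eq {θ τ : Ω → ℝ} (hθ : IsStoppingTime ℱ (fun ω => (θ ω : WithTop ℝ)))
    (hτ : IsStoppingTime ℱ (fun ω => (τ ω : WithTop ℝ)))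
    {D B : Set Ω} (hD : MeasurableSet[hθ.measurableSpace] D)
    (hsub : ∀ ω ∈ D, θ ω = τ ω) (hB : MeasurableSet[hτ.measurableSpace] B) :
    MeasurableSet[hθ.measurableSpace] (D ∩ B) := by
  refine (st_ms_iff hθ _).mpr
    ⟨((st_ms_iff hθ D).mp hD).1.inter ((st_ms_iff hτ B).mp hB).1, fun t => ?_⟩
  have heq : (D ∩ B) ∩ {ω | θ ω ≤ t} = (D ∩ {ω | θ ω ≤ t}) ∩ (B ∩ {ω | τ ω ≤ t}) := by
    ext ω
    constructor
    · rintro ⟨⟨h1, h2⟩, h3⟩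
      refine ⟨⟨h1, h3⟩, h2, ?_⟩
      change τ ω ≤ t
      rw [← hsub ω h1]
      exact h3
    · rintro ⟨⟨h1, h3⟩, h2, _⟩
      exact ⟨⟨h1, h2⟩, h3⟩
  rw [heq]
  exact (((st_ms_iff hθ D).mp hD).2 t).inter (((st_ms_iff hτ B).mp hB).2 t)

lemma ind_meas_loc {θ τ : Ω → ℝ} (hθ : IsStoppingTime ℱ (fun ω => (θ ω : WithTop ℝ)))
    (hτ : IsStoppingTime ℱ (fun ω => (τ ω : WithTop ℝ)))
    {D : Set Ω} (hD : MeasurableSet[hθ.measurableSpace] D)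
    (hsub : ∀ ω ∈ D, θ ω = τ ω) {f : Ω → ℝ}
    (hf : Measurable[hτ.measurableSpace] f) :
    Measurable[hθ.measurableSpace] (D.indicator f) := by
  intro s hs
  rw [Set.indicator_preimage]
  unfold Set.ite
  refine MeasurableSet.union ?_ ?_
  · rw [Set.inter_comm]
    exact ms_inter_of_eq hθ hτ hD hsub (hf hs)
  · by_cases h0 : (0 : ℝ) ∈ s
    · have : ((0 : Ω → ℝ) ⁻¹' s) \ D = Dᶜ := by
        ext ω; simp [h0]
      rw [this]
      exact hD.compl
    · have : ((0 : Ω → ℝ) ⁻¹' s) \ D = ∅ := by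
        ext ω; simp [h0]
      rw [this]
      exact @MeasurableSet.empty _ hθ.measurableSpace

lemma cond_localize (h7 : 𝔈.PosHom) {θ τ : Ω → ℝ} (hθ : Stop0 ℱ T θ) (hτ : Stop0 ℱ T τ)
    (hle : ∀ ω, θ ω ≤ τ ω) {D : Set Ω} (hD : MeasurableSet[hθ.1.measurableSpace] D)
    (hsub : ∀ ω ∈ D, θ ω = τ ω) {ξ : Ω → ℝ} (hξ : ξ ∈ 𝔈.Dom) (hξ0 : 0 ≤ᵐ[μ] ξ) :
    D.indicator (𝔈.cond θ ξ) =ᵐ[μ] D.indicator (𝔈.cond τ ξ) := by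
  have hmem := 𝔈.cond_mem hτ hξ hξ0
  have hnn := 𝔈.cond_nonneg hτ hξ hξ0
  have h1 : 𝔈.cond θ (𝔈.cond τ ξ) =ᵐ[μ] 𝔈.cond θ ξ := 𝔈.time_consistent hθ hτ hle hξ hξ0
  have h2 := 𝔈.zero_one hθ hmem hnn hD
  have h3 : Measurable[hθ.1.measurableSpace] (D.indicator (𝔈.cond τ ξ)) :=
    ind_meas_loc hθ.1 hτ.1 hD hsub (𝔈.cond_adapted hτ hξ hξ0)
  have hDm : MeasurableSet D := hθ.ms_le _ hD
  have h4 := cond_id h7 hθ (𝔈.indicator_mem hmem hDm) (ind_nonneg hnn) h3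
  filter_upwards [h1, h2, h4] with ω e1 e2 e4
  by_cases hω : ω ∈ D
  · have h := e2.symm.trans e4
    simp only [Set.indicator_of_mem hω] at h ⊢
    rw [← e1]
    exact h
  · rw [Set.indicator_of_notMem hω, Set.indicator_of_notMem hω]

lemma cond_ind_congr {σ : Ω → ℝ} (hσ : Stop0 ℱ T σ) {A : Set Ω}
    (hA : MeasurableSet[hσ.1.measurableSpace] A) {ξ η : Ω → ℝ}
    (hξ : ξ ∈ 𝔈.Dom) (hξ0 : 0 ≤ᵐ[μ] ξ) (hη : η ∈ 𝔈.Dom) (hη0 : 0 ≤ᵐ[μ] η)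
    (h : ∀ᵐ ω ∂μ, ω ∈ A → ξ ω = η ω) :
    A.indicator (𝔈.cond σ ξ) =ᵐ[μ] A.indicator (𝔈.cond σ η) := by
  have hAm : MeasurableSet A := hσ.ms_le _ hA
  have h1 := 𝔈.zero_one hσ hξ hξ0 hA
  have h2 := 𝔈.zero_one hσ hη hη0 hA
  have h3 : A.indicator ξ =ᵐ[μ] A.indicator η := by
    filter_upwards [h] with ω h
    by_cases hω : ω ∈ A
    · rw [Set.indicator_of_mem hω, Set.indicator_of_mem hω, h hω]
    · rw [Set.indicator_of_notMem hω, Set.indicator_of_notMem hω]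
  have h4 := cond_congr hσ (𝔈.indicator_mem hξ hAm) (ind_nonneg hξ0)
    (𝔈.indicator_mem hη hAm) (ind_nonneg hη0) h3
  exact h1.symm.trans (h4.trans h2)

/-! ### monotone convergence for `E0` -/

lemma E0_mct (hT : 0 < T) (h6 : 𝔈.Subadditive) (h7 : 𝔈.PosHom) {ξ : ℕ → Ω → ℝ}
    {ζ g : Ω → ℝ} (hd : ∀ n, ξ n ∈ 𝔈.Dom) (hn : ∀ n, 0 ≤ᵐ[μ] ξ n)
    (hm : ∀ n, Measurable (ξ n)) (hζd : ζ ∈ 𝔈.Dom) (hζn : 0 ≤ᵐ[μ] ζ)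
    (hg : Measurable g) (hgζ : g =ᵐ[μ] ζ)
    (hconv : ∀ᵐ ω ∂μ, Monotone (fun n => ξ n ω) ∧
      Tendsto (fun n => ξ n ω) atTop (nhds (ζ ω))) :
    Tendsto (fun n => 𝔈.E0 (ξ n)) atTop (nhds (𝔈.E0 ζ)) := by
  have hle : ∀ n, ξ n ≤ᵐ[μ] ζ := by
    intro n
    filter_upwards [hconv] with ω hω
    exact hω.1.ge_of_tendsto hω.2 n
  have hub : ∀ n, 𝔈.E0 (ξ n) ≤ 𝔈.E0 ζ := fun n =>
    E0_mono hT (hd n) (hn n) hζd hζn (hle n)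
  rw [Metric.tendsto_atTop]
  intro ε hε
  set A : ℕ → Set Ω := fun n =>
    ⋂ k ∈ Finset.range (n + 1), {ω | ξ k ω + ε / 3 ≤ g ω} with hA
  have hAmeas : ∀ n, MeasurableSet (A n) := by
    intro n
    refine MeasurableSet.biInter (Set.to_countable _) fun k _ => ?_
    exact measurableSet_le ((hm k).add_const _) hg
  have hAanti : Antitone A := by
    intro a b hab
    refine Set.iInter₂_mono' fun k hk => ⟨k, ?_, le_rfl⟩
    simp only [Finset.mem_range] at hk ⊢
    omega
  have hAnull : ∀ᵐ ω ∂μ, ω ∉ ⋂ n, A n := by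
    filter_upwards [hconv, hgζ] with ω hω hgω
    intro hmem
    have hεω : ∀ᶠ n in atTop, ζ ω - ε / 3 < ξ n ω :=
      hω.2.eventually (eventually_gt_nhds (by linarith))
    obtain ⟨n, hn'⟩ := hεω.exists
    have h3 := Set.mem_iInter₂.mp (Set.mem_iInter.mp hmem n) n (Finset.self_mem_range_succ n)
    simp only [Set.mem_setOf_eq] at h3
    rw [hgω] at h3
    linarith
  have hkey : ∀ n, 𝔈.E0 ζ ≤ 𝔈.E0 (ξ n) + ε / 3 + 𝔈.E0 ((A n).indicator ζ) := by
    intro n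
    have hptwise : ζ ≤ᵐ[μ] (ξ n + fun _ => ε / 3) + (A n).indicator ζ := by
      have hallnn : ∀ᵐ ω ∂μ, ∀ k, 0 ≤ ξ k ω := ae_all_iff.mpr hn
      filter_upwards [hconv, hgζ, hζn, hallnn] with ω hω hgω hζω hnnω
      by_cases hmem : ω ∈ A n
      · have : (A n).indicator ζ ω = ζ ω := Set.indicator_of_mem hmem ζ
        simp only [Pi.add_apply, this]
        have : 0 ≤ ξ n ω := hnnω n
        linarith
      · rw [hA] at hmem
        simp only [Set.mem_iInter, Set.mem_setOf_eq, Finset.mem_range] at hmem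
        push_neg at hmem
        obtain ⟨k, hk, hkω⟩ := hmem
        have h1 : ξ k ω ≤ ξ n ω := hω.1 (by omega)
        have h2 : (0:ℝ) ≤ (A n).indicator ζ ω := Set.indicator_apply_nonneg fun _ => hζω
        simp only [Pi.add_apply]
        rw [hgω] at hkω
        linarith
    have hd1 : (ξ n + fun _ => ε / 3) ∈ 𝔈.Dom := 𝔈.add_mem (hd n) (𝔈.const_mem _)
    have hn1 : 0 ≤ᵐ[μ] (ξ n + fun _ => ε / 3) := by
      filter_upwards [hn n] with ω h
      simp only [Pi.add_apply]
      linarith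
    have hd2 := 𝔈.indicator_mem hζd (hAmeas n)
    have hn2 : 0 ≤ᵐ[μ] (A n).indicator ζ := ind_nonneg hζn
    calc 𝔈.E0 ζ ≤ 𝔈.E0 ((ξ n + fun _ => ε / 3) + (A n).indicator ζ) :=
          E0_mono hT hζd hζn (𝔈.add_mem hd1 hd2)
            (by filter_upwards [hn1, hn2] with ω h1 h2
                have h1' : (0:ℝ) ≤ (ξ n + (fun _ => ε / 3) : Ω → ℝ) ω := h1
                have h2' : (0:ℝ) ≤ (A n).indicator ζ ω := h2
                exact add_nonneg h1' h2') hptwise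
      _ ≤ 𝔈.E0 (ξ n + fun _ => ε / 3) + 𝔈.E0 ((A n).indicator ζ) :=
          E0_subadd hT h6 hd1 hn1 hd2 hn2
      _ ≤ 𝔈.E0 (ξ n) + 𝔈.E0 (fun _ => ε / 3) + 𝔈.E0 ((A n).indicator ζ) := by
          have := E0_subadd hT h6 (hd n) (hn n) (𝔈.const_mem (ε/3))
            (Filter.Eventually.of_forall fun ω => by positivity)
          linarith
      _ = 𝔈.E0 (ξ n) + ε / 3 + 𝔈.E0 ((A n).indicator ζ) := by
          rw [E0_const hT h7 (by positivity : (0:ℝ) ≤ ε / 3)]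
  have hind : Tendsto (fun n => 𝔈.E0 ((A n).indicator ζ)) atTop (nhds 0) := by
    have h := 𝔈.h2 𝔈.zero_mem (Filter.Eventually.of_forall fun ω => le_rfl) hζd hζn
      hAmeas hAanti hAnull
    have e0 : 𝔈.E0 (fun _ => (0:ℝ)) = 0 := E0_const hT h7 le_rfl
    rw [e0] at h
    have heq : ∀ n, ((fun _ : Ω => (0:ℝ)) + (A n).indicator ζ) = (A n).indicator ζ := by
      intro n; funext ω; simp
    simpa only [heq] using h
  rw [Metric.tendsto_atTop] at hind
  obtain ⟨N, hN⟩ := hind (ε / 3) (by positivity)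
  refine ⟨N, fun n hn' => ?_⟩
  have h1 := hkey n
  have h2 := hN n hn'
  rw [Real.dist_eq, abs_lt] at h2 ⊢
  constructor
  · have := hub n
    linarith [h2.1, h2.2]
  · linarith [hub n, h2.1, h2.2]

/-! ### the reward and value families -/

section Families

variable {X v : (Ω → ℝ) → Ω → ℝ}

lemma Xdom (hX : Admissible 𝔈 X) {ρ : Ω → ℝ} (hρ : Stop0 ℱ T ρ) : X ρ ∈ 𝔈.Dom :=
  (hX.1 ρ hρ).1

lemma Xnn (hX : Admissible 𝔈 X) {ρ : Ω → ℝ} (hρ : Stop0 ℱ T ρ) : 0 ≤ᵐ[μ] X ρ :=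
  (hX.1 ρ hρ).2.1

lemma Xms (hX : Admissible 𝔈 X) {ρ : Ω → ℝ} (hρ : Stop0 ℱ T ρ) :
    Measurable[hρ.1.measurableSpace] (X ρ) :=
  (hX.1 ρ hρ).2.2

lemma condX_le_v (hv : IsValueFam 𝔈 X v) {σ ρ : Ω → ℝ} (hσ : Stop0 ℱ T σ)
    (hρ : IsStopIn ℱ T σ ρ) : 𝔈.cond σ (X ρ) ≤ᵐ[μ] v σ :=
  (hv σ hσ).1 _ ⟨ρ, hρ, rfl⟩

lemma X_le_v (h7 : 𝔈.PosHom) (hX : Admissible 𝔈 X) (hv : IsValueFam 𝔈 X v)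
    {σ : Ω → ℝ} (hσ : Stop0 ℱ T σ) : X σ ≤ᵐ[μ] v σ := by
  have h1 := condX_le_v hv hσ (IsStopIn.refl hσ)
  have h2 := cond_id h7 hσ (Xdom hX hσ) (Xnn hX hσ) (Xms hX hσ)
  exact h2.symm.le.trans h1

lemma v_nn (h7 : 𝔈.PosHom) (hX : Admissible 𝔈 X) (hv : IsValueFam 𝔈 X v)
    {σ : Ω → ℝ} (hσ : Stop0 ℱ T σ) : 0 ≤ᵐ[μ] v σ :=
  (Xnn hX hσ).trans (X_le_v h7 hX hv hσ)

/-- the conditional values at `σ` form an upward directed family. -/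
lemma exists_dir (h7 : 𝔈.PosHom) (hX : Admissible 𝔈 X) {σ ρ₁ ρ₂ : Ω → ℝ}
    (hσ : Stop0 ℱ T σ) (h₁ : IsStopIn ℱ T σ ρ₁) (h₂ : IsStopIn ℱ T σ ρ₂) :
    ∃ ρ₃, IsStopIn ℱ T σ ρ₃ ∧ 𝔈.cond σ (X ρ₃) =ᵐ[μ]
      fun ω => max (𝔈.cond σ (X ρ₁) ω) (𝔈.cond σ (X ρ₂) ω) := by
  have hs₁ : Stop0 ℱ T ρ₁ := h₁.stop0 hσ
  have hs₂ : Stop0 ℱ T ρ₂ := h₂.stop0 hσ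
  set C : Set Ω := {ω | 𝔈.cond σ (X ρ₂) ω ≤ 𝔈.cond σ (X ρ₁) ω} with hCdef
  have hCm : MeasurableSet[hσ.1.measurableSpace] C :=
    measurableSet_le (𝔈.cond_adapted hσ (Xdom hX hs₂) (Xnn hX hs₂))
      (𝔈.cond_adapted hσ (Xdom hX hs₁) (Xnn hX hs₁))
  have hbd : ∀ ω, σ ω ≤ C.piecewise ρ₁ ρ₂ ω ∧ C.piecewise ρ₁ ρ₂ ω ≤ T := fun ω => by
    by_cases hω : ω ∈ C
    · rw [Set.piecewise_eq_of_mem _ _ _ hω]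
      exact ⟨h₁.2.1 ω, h₁.2.2 ω⟩
    · rw [Set.piecewise_eq_of_notMem _ _ _ hω]
      exact ⟨h₂.2.1 ω, h₂.2.2 ω⟩
  have hstop₃ : IsStopIn ℱ T σ (C.piecewise ρ₁ ρ₂) :=
    ⟨glue_stop hσ.1 h₁.1 h₂.1 h₁.2.1 h₂.2.1 hCm, fun ω => (hbd ω).1, fun ω => (hbd ω).2⟩
  have hs₃ : Stop0 ℱ T (C.piecewise ρ₁ ρ₂) := hstop₃.stop0 hσ
  have e1 : C.indicator (𝔈.cond σ (X (C.piecewise ρ₁ ρ₂))) =ᵐ[μ]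
      C.indicator (𝔈.cond σ (X ρ₁)) := by
    refine cond_ind_congr hσ hCm (Xdom hX hs₃) (Xnn hX hs₃) (Xdom hX hs₁) (Xnn hX hs₁) ?_
    filter_upwards [hX.2 (C.piecewise ρ₁ ρ₂) ρ₁ hs₃ hs₁] with ω h hmem
    exact h (Set.piecewise_eq_of_mem _ _ _ hmem)
  have e2 : Cᶜ.indicator (𝔈.cond σ (X (C.piecewise ρ₁ ρ₂))) =ᵐ[μ]
      Cᶜ.indicator (𝔈.cond σ (X ρ₂)) := by
    refine cond_ind_congr hσ hCm.compl (Xdom hX hs₃) (Xnn hX hs₃) (Xdom hX hs₂) (Xnn hX hs₂) ?_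
    filter_upwards [hX.2 (C.piecewise ρ₁ ρ₂) ρ₂ hs₃ hs₂] with ω h hmem
    exact h (Set.piecewise_eq_of_notMem _ _ _ hmem)
  refine ⟨C.piecewise ρ₁ ρ₂, hstop₃, ?_⟩
  filter_upwards [e1, e2] with ω e1 e2
  by_cases hω : ω ∈ C
  · simp only [Set.indicator_of_mem hω] at e1
    rw [e1, max_eq_left (show 𝔈.cond σ (X ρ₂) ω ≤ 𝔈.cond σ (X ρ₁) ω from hω)]
  · have hω' : ω ∈ Cᶜ := hω
    simp only [Set.indicator_of_mem hω'] at e2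
    rw [e2, max_eq_right (le_of_lt (lt_of_not_ge hω))]

/-- countable increasing representation of the value function at a stopping time,
together with a measurable version lying in the domain. -/
lemma exists_rep (hT : 0 < T) (h7 : 𝔈.PosHom) (hX : Admissible 𝔈 X)
    (hv : IsValueFam 𝔈 X v) (hbdd : BddRewardE0 𝔈 X) {σ : Ω → ℝ} (hσ : Stop0 ℱ T σ) :
    ∃ (ρs : ℕ → Ω → ℝ) (g : Ω → ℝ),
      (∀ n, IsStopIn ℱ T σ (ρs n)) ∧
      (∀ᵐ ω ∂μ, Monotone (fun n => 𝔈.cond σ (X (ρs n)) ω) ∧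
        Tendsto (fun n => 𝔈.cond σ (X (ρs n)) ω) atTop (nhds (v σ ω))) ∧
      Measurable[hσ.1.measurableSpace] g ∧ g ∈ 𝔈.Dom ∧ g =ᵐ[μ] v σ := by
  classical
  set F : (Ω → ℝ) → Ω → ℝ := fun ρ => 𝔈.cond σ (X ρ) with hF
  have hFd : ∀ {ρ : Ω → ℝ}, IsStopIn ℱ T σ ρ → F ρ ∈ 𝔈.Dom := fun {ρ} hρ =>
    𝔈.cond_mem hσ (Xdom hX (hρ.stop0 hσ)) (Xnn hX (hρ.stop0 hσ))
  have hFn : ∀ {ρ : Ω → ℝ}, IsStopIn ℱ T σ ρ → 0 ≤ᵐ[μ] F ρ := fun {ρ} hρ =>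
    𝔈.cond_nonneg hσ (Xdom hX (hρ.stop0 hσ)) (Xnn hX (hρ.stop0 hσ))
  have hFms : ∀ {ρ : Ω → ℝ}, IsStopIn ℱ T σ ρ → Measurable[hσ.1.measurableSpace] (F ρ) :=
    fun {ρ} hρ => 𝔈.cond_adapted hσ (Xdom hX (hρ.stop0 hσ)) (Xnn hX (hρ.stop0 hσ))
  have hFm : ∀ {ρ : Ω → ℝ}, IsStopIn ℱ T σ ρ → Measurable (F ρ) := fun {ρ} hρ =>
    (hFms hρ).mono hσ.ms_le le_rfl
  set Int : (Ω → ℝ) → ℝ := fun ρ => ∫ ω, arctan (F ρ ω) ∂μ with hInt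
  set A : Set ℝ := {x | ∃ ρ, IsStopIn ℱ T σ ρ ∧ x = Int ρ} with hA
  have hAne : A.Nonempty := ⟨Int σ, σ, IsStopIn.refl hσ, rfl⟩
  have hAbdd : BddAbove A := ⟨π / 2, by
    rintro x ⟨ρ, hρ, rfl⟩
    exact arctan_int_le_pi (hFm hρ)⟩
  set α := sSup A with hα
  have hchoori : ∀ n : ℕ, ∃ ρ, IsStopIn ℱ T σ ρ ∧ α - 1 / (n + 1) < Int ρ := by
    intro n
    have hlt : α - 1 / ((n : ℝ) + 1) < α := by
      have : (0:ℝ) < 1 / ((n:ℝ) + 1) := by positivity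
      linarith
    obtain ⟨x, hx, hlt2⟩ := exists_lt_of_lt_csSup hAne hlt
    obtain ⟨ρ, hρ, rfl⟩ := hx
    exact ⟨ρ, hρ, hlt2⟩
  choose ρ' hρ'1 hρ'2 using hchoori
  have hdir : ∀ p q : Ω → ℝ, IsStopIn ℱ T σ p → IsStopIn ℱ T σ q →
      ∃ r, IsStopIn ℱ T σ r ∧ F r =ᵐ[μ] fun ω => max (F p ω) (F q ω) :=
    fun p q hp hq => exists_dir h7 hX hσ hp hq
  choose dir hdir1 hdir2 using hdir
  set Q : ℕ → {p : Ω → ℝ // IsStopIn ℱ T σ p} := fun n =>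
    Nat.rec ⟨ρ' 0, hρ'1 0⟩ (fun k ih => ⟨dir ih.1 (ρ' (k + 1)) ih.2 (hρ'1 (k + 1)),
      hdir1 ih.1 (ρ' (k + 1)) ih.2 (hρ'1 (k + 1))⟩) n with hQ
  set ρs : ℕ → Ω → ℝ := fun n => (Q n).1 with hρs
  have hstop : ∀ n, IsStopIn ℱ T σ (ρs n) := fun n => (Q n).2
  have hqsucc : ∀ n, F (ρs (n + 1)) =ᵐ[μ]
      fun ω => max (F (ρs n) ω) (F (ρ' (n + 1)) ω) := fun n =>
    hdir2 (Q n).1 (ρ' (n + 1)) (Q n).2 (hρ'1 (n + 1))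
  have hmono : ∀ n, F (ρs n) ≤ᵐ[μ] F (ρs (n + 1)) := fun n => by
    filter_upwards [hqsucc n] with ω h
    rw [h]
    exact le_max_left _ _
  have hlev : ∀ n, F (ρs n) ≤ᵐ[μ] v σ := fun n => condX_le_v hv hσ (hstop n)
  have hnnF : ∀ n, 0 ≤ᵐ[μ] F (ρs n) := fun n => hFn (hstop n)
  have hIle : ∀ n, Int (ρs n) ≤ α := fun n => le_csSup hAbdd ⟨_, hstop n, rfl⟩
  have hIge : ∀ n, α - 1 / (n + 1) < Int (ρs n) := by
    intro n
    cases n with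
    | zero => exact hρ'2 0
    | succ k =>
      refine lt_of_lt_of_le (hρ'2 (k + 1)) ?_
      have h1 : Int (ρs (k + 1)) = ∫ ω, arctan (max (F (ρs k) ω) (F (ρ' (k+1)) ω)) ∂μ := by
        refine integral_congr_ae ?_
        filter_upwards [hqsucc k] with ω h
        rw [h]
      rw [h1]
      refine integral_mono_ae (arctan_int (hFm (hρ'1 (k+1))))
        (arctan_int ((hFm (hstop k)).max (hFm (hρ'1 (k+1))))) ?_
      exact Filter.Eventually.of_forall fun ω =>
        Real.arctan_strictMono.monotone (le_max_right _ _)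
  set g : Ω → ℝ := fun ω => ⨆ n, F (ρs n) ω with hg
  have hgmsp : Measurable[hσ.1.measurableSpace] g :=
    Measurable.iSup fun n => hFms (hstop n)
  have hgm : Measurable g := hgmsp.mono hσ.ms_le le_rfl
  have hmonog : ∀ᵐ ω ∂μ, Monotone (fun n => F (ρs n) ω) ∧
      Tendsto (fun n => F (ρs n) ω) atTop (nhds (g ω)) ∧ g ω ≤ v σ ω := by
    filter_upwards [ae_all_iff.mpr hmono, ae_all_iff.mpr hlev] with ω h1 h2
    have hm : Monotone fun n => F (ρs n) ω := monotone_nat_of_le_succ h1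
    have hbd : BddAbove (Set.range fun n => F (ρs n) ω) := ⟨v σ ω, by
      rintro x ⟨n, rfl⟩
      exact h2 n⟩
    exact ⟨hm, tendsto_atTop_ciSup hm hbd, ciSup_le h2⟩
  have hIconv : Tendsto (fun n => Int (ρs n)) atTop (nhds (∫ ω, arctan (g ω) ∂μ)) := by
    refine tendsto_integral_of_dominated_convergence (fun _ => π / 2)
      (fun n => (Real.measurable_arctan.comp (hFm (hstop n))).aestronglyMeasurable)
      (integrable_const _) (fun n => Filter.Eventually.of_forall fun ω => ?_) ?_
    · rw [Real.norm_eq_abs, abs_le]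
      exact ⟨(Real.neg_pi_div_two_lt_arctan _).le, (Real.arctan_lt_pi_div_two _).le⟩
    · filter_upwards [hmonog] with ω hω
      exact (Real.continuous_arctan.tendsto _).comp hω.2.1
  have hIg : ∫ ω, arctan (g ω) ∂μ = α := by
    have hle1 : ∫ ω, arctan (g ω) ∂μ ≤ α :=
      le_of_tendsto hIconv (Filter.Eventually.of_forall hIle)
    have hge1 : α ≤ ∫ ω, arctan (g ω) ∂μ := by
      have h2 : Tendsto (fun n : ℕ => α - 1 / ((n:ℝ) + 1)) atTop (nhds α) := by
        have := tendsto_one_div_add_atTop_nhds_zero_nat (𝕜 := ℝ)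
        have h3 := tendsto_const_nhds (x := α) (f := atTop (α := ℕ)) |>.sub this
        simpa using h3
      exact le_of_tendsto_of_tendsto' h2 hIconv fun n => (hIge n).le
    linarith
  have hub : ∀ ρ, IsStopIn ℱ T σ ρ → F ρ ≤ᵐ[μ] g := by
    intro ρ hρ
    have hMconv : Tendsto (fun n => ∫ ω, arctan (max (F (ρs n) ω) (F ρ ω)) ∂μ) atTop
        (nhds (∫ ω, arctan (max (g ω) (F ρ ω)) ∂μ)) := by
      refine tendsto_integral_of_dominated_convergence (fun _ => π / 2)
        (fun n => (Real.measurable_arctan.comp ((hFm (hstop n)).max (hFm hρ))).aestronglyMeasurable)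
        (integrable_const _) (fun n => Filter.Eventually.of_forall fun ω => ?_) ?_
      · rw [Real.norm_eq_abs, abs_le]
        exact ⟨(Real.neg_pi_div_two_lt_arctan _).le, (Real.arctan_lt_pi_div_two _).le⟩
      · filter_upwards [hmonog] with ω hω
        exact (Real.continuous_arctan.tendsto _).comp (hω.2.1.max tendsto_const_nhds)
    have hMle : ∀ n, ∫ ω, arctan (max (F (ρs n) ω) (F ρ ω)) ∂μ ≤ α := by
      intro n
      have e := hdir2 (ρs n) ρ (hstop n) hρ
      have h1 : Int (dir (ρs n) ρ (hstop n) hρ) =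
          ∫ ω, arctan (max (F (ρs n) ω) (F ρ ω)) ∂μ := by
        refine integral_congr_ae ?_
        filter_upwards [e] with ω h
        rw [h]
      rw [← h1]
      exact le_csSup hAbdd ⟨_, hdir1 (ρs n) ρ (hstop n) hρ, rfl⟩
    have hInt_le : ∫ ω, arctan (max (g ω) (F ρ ω)) ∂μ ≤ α :=
      le_of_tendsto hMconv (Filter.Eventually.of_forall hMle)
    have heq := ae_eq_of_arctan_int hgm (hgm.max (hFm hρ))
      (Filter.Eventually.of_forall fun ω => le_max_left _ _) (by rw [hIg]; exact hInt_le)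
    filter_upwards [heq] with ω h
    calc F ρ ω ≤ max (g ω) (F ρ ω) := le_max_right _ _
      _ = g ω := h.symm
  have hvle : v σ ≤ᵐ[μ] g := (hv σ hσ).2 g (by
    rintro f ⟨ρ, hρ, rfl⟩
    exact hub ρ hρ)
  have hgle : g ≤ᵐ[μ] v σ := by
    filter_upwards [hmonog] with ω h
    exact h.2.2
  have hgv : g =ᵐ[μ] v σ := hgle.antisymm hvle
  obtain ⟨Cb, hCb⟩ := hbdd
  have hgDom : g ∈ 𝔈.Dom := by
    refine 𝔈.h5 (fun n => hFd (hstop n)) (fun n => hFn (hstop n)) ?_ ⟨Cb, ?_⟩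
    · filter_upwards [hmonog] with ω h
      exact h.2.1
    · refine Filter.Frequently.of_forall fun n => ?_
      have h1 : 𝔈.E0 (F (ρs n)) = 𝔈.E0 (X (ρs n)) :=
        E0_cond hT hσ (Xdom hX ((hstop n).stop0 hσ)) (Xnn hX ((hstop n).stop0 hσ))
      rw [h1]
      exact hCb _ ((hstop n).stop0 hσ)
  refine ⟨ρs, g, hstop, ?_, hgmsp, hgDom, hgv⟩
  filter_upwards [hmonog, hgv] with ω h hgvω
  exact ⟨h.1, hgvω ▸ h.2.1⟩

lemma v_dom (hT : 0 < T) (h7 : 𝔈.PosHom) (hX : Admissible 𝔈 X) (hv : IsValueFam 𝔈 X v)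
    (hbdd : BddRewardE0 𝔈 X) {σ : Ω → ℝ} (hσ : Stop0 ℱ T σ) : v σ ∈ 𝔈.Dom := by
  obtain ⟨ρs, g, hstop, hconv, _, _, _⟩ := exists_rep hT h7 hX hv hbdd hσ
  obtain ⟨Cb, hCb⟩ := hbdd
  refine 𝔈.h5 (fun n => 𝔈.cond_mem hσ (Xdom hX ((hstop n).stop0 hσ))
    (Xnn hX ((hstop n).stop0 hσ)))
    (fun n => 𝔈.cond_nonneg hσ (Xdom hX ((hstop n).stop0 hσ)) (Xnn hX ((hstop n).stop0 hσ)))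
    (by filter_upwards [hconv] with ω h using h.2) ⟨Cb, ?_⟩
  refine Filter.Frequently.of_forall fun n => ?_
  have h1 : 𝔈.E0 (𝔈.cond σ (X (ρs n))) = 𝔈.E0 (X (ρs n)) :=
    E0_cond hT hσ (Xdom hX ((hstop n).stop0 hσ)) (Xnn hX ((hstop n).stop0 hσ))
  rw [h1]
  exact hCb _ ((hstop n).stop0 hσ)

lemma E0_v_le (hT : 0 < T) (h6 : 𝔈.Subadditive) (h7 : 𝔈.PosHom) (hX : Admissible 𝔈 X)
    (hv : IsValueFam 𝔈 X v) (hbdd : BddRewardE0 𝔈 X) {σ : Ω → ℝ} (hσ : Stop0 ℱ T σ)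
    {β : ℝ} (hβ : ∀ ρ, IsStopIn ℱ T σ ρ → 𝔈.E0 (X ρ) ≤ β) : 𝔈.E0 (v σ) ≤ β := by
  obtain ⟨ρs, g, hstop, hconv, hgms, _, hgv⟩ := exists_rep hT h7 hX hv hbdd hσ
  have hXd : ∀ n, X (ρs n) ∈ 𝔈.Dom := fun n => Xdom hX ((hstop n).stop0 hσ)
  have hXn : ∀ n, 0 ≤ᵐ[μ] X (ρs n) := fun n => Xnn hX ((hstop n).stop0 hσ)
  have hconv2 := E0_mct hT h6 h7 (ξ := fun n => 𝔈.cond σ (X (ρs n))) (ζ := v σ) (g := g)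
    (fun n => 𝔈.cond_mem hσ (hXd n) (hXn n)) (fun n => 𝔈.cond_nonneg hσ (hXd n) (hXn n))
    (fun n => (𝔈.cond_adapted hσ (hXd n) (hXn n)).mono hσ.ms_le le_rfl)
    (v_dom hT h7 hX hv hbdd hσ) (v_nn h7 hX hv hσ) (hgms.mono hσ.ms_le le_rfl) hgv hconv
  refine le_of_tendsto hconv2 (Filter.Eventually.of_forall fun n => ?_)
  rw [E0_cond hT hσ (hXd n) (hXn n)]
  exact hβ _ (hstop n)

/-- the value family is a supermartingale family. -/
lemma v_supermart (hT : 0 < T) (h6 : 𝔈.Subadditive) (h7 : 𝔈.PosHom) (hX : Admissible 𝔈 X)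
    (hv : IsValueFam 𝔈 X v) (hbdd : BddRewardE0 𝔈 X) {τ ρ : Ω → ℝ} (hτ : Stop0 ℱ T τ)
    (hρ : Stop0 ℱ T ρ) (hle : ∀ ω, τ ω ≤ ρ ω) : 𝔈.cond τ (v ρ) ≤ᵐ[μ] v τ := by
  obtain ⟨ρs, g, hstop, hconv, hgms, hgD, hgv⟩ := exists_rep hT h7 hX hv hbdd hρ
  have hvd := v_dom hT h7 hX hv hbdd hρ
  have hvn := v_nn h7 hX hv hρ
  set L : Ω → ℝ := 𝔈.cond τ (v ρ) with hL
  have hLd := 𝔈.cond_mem hτ hvd hvn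
  have hLn0 := 𝔈.cond_nonneg hτ hvd hvn
  set Ln : ℕ → Ω → ℝ := fun n => 𝔈.cond τ (X (ρs n)) with hLndef
  have hstopτ : ∀ n, IsStopIn ℱ T τ (ρs n) := fun n =>
    ⟨(hstop n).1, fun ω => (hle ω).trans ((hstop n).2.1 ω), (hstop n).2.2⟩
  have hXd : ∀ n, X (ρs n) ∈ 𝔈.Dom := fun n => Xdom hX ((hstop n).stop0 hρ)
  have hXn : ∀ n, 0 ≤ᵐ[μ] X (ρs n) := fun n => Xnn hX ((hstop n).stop0 hρ)
  have hfd : ∀ n, 𝔈.cond ρ (X (ρs n)) ∈ 𝔈.Dom := fun n => 𝔈.cond_mem hρ (hXd n) (hXn n)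
  have hfn : ∀ n, 0 ≤ᵐ[μ] 𝔈.cond ρ (X (ρs n)) := fun n => 𝔈.cond_nonneg hρ (hXd n) (hXn n)
  have hfm : ∀ n, Measurable (𝔈.cond ρ (X (ρs n))) := fun n =>
    (𝔈.cond_adapted hρ (hXd n) (hXn n)).mono hρ.ms_le le_rfl
  have hLd' : ∀ n, Ln n ∈ 𝔈.Dom := fun n => 𝔈.cond_mem hτ (hXd n) (hXn n)
  have hLn' : ∀ n, 0 ≤ᵐ[μ] Ln n := fun n => 𝔈.cond_nonneg hτ (hXd n) (hXn n)
  have hLm : ∀ n, Measurable (Ln n) := fun n =>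
    (𝔈.cond_adapted hτ (hXd n) (hXn n)).mono hτ.ms_le le_rfl
  have hLeq : ∀ n, 𝔈.cond τ (𝔈.cond ρ (X (ρs n))) =ᵐ[μ] Ln n := fun n =>
    𝔈.time_consistent hτ hρ hle (hXd n) (hXn n)
  have hLnle : ∀ n, Ln n ≤ᵐ[μ] L := fun n =>
    (hLeq n).symm.le.trans (𝔈.mono hτ (hfd n) (hfn n) hvd hvn (condX_le_v hv hρ (hstop n)))
  have hLnv : ∀ n, Ln n ≤ᵐ[μ] v τ := fun n => condX_le_v hv hτ (hstopτ n)
  have hLnmono : ∀ n, Ln n ≤ᵐ[μ] Ln (n + 1) := by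
    intro n
    have hf : 𝔈.cond ρ (X (ρs n)) ≤ᵐ[μ] 𝔈.cond ρ (X (ρs (n+1))) := by
      filter_upwards [hconv] with ω h
      exact h.1 (Nat.le_succ n)
    have := 𝔈.mono hτ (hfd n) (hfn n) (hfd (n+1)) (hfn (n+1)) hf
    exact (hLeq n).symm.le.trans (this.trans (hLeq (n+1)).le)
  set g2 : Ω → ℝ := fun ω => ⨆ n, Ln n ω with hg2
  have hg2m : Measurable g2 := Measurable.iSup hLm
  have hgood : ∀ᵐ ω ∂μ, Monotone (fun n => Ln n ω) ∧
      Tendsto (fun n => Ln n ω) atTop (nhds (g2 ω)) ∧ g2 ω ≤ L ω ∧ g2 ω ≤ v τ ω ∧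
      0 ≤ g2 ω := by
    filter_upwards [ae_all_iff.mpr hLnmono, ae_all_iff.mpr hLnle, ae_all_iff.mpr hLnv,
      ae_all_iff.mpr hLn'] with ω h1 h2 h3 h4
    have hm := monotone_nat_of_le_succ h1
    have hbd : BddAbove (Set.range fun n => Ln n ω) := ⟨L ω, by
      rintro x ⟨n, rfl⟩
      exact h2 n⟩
    exact ⟨hm, tendsto_atTop_ciSup hm hbd, ciSup_le h2, ciSup_le h3,
      le_trans (h4 0) (le_ciSup hbd 0)⟩
  have hg2D : g2 ∈ 𝔈.Dom := by
    refine 𝔈.h5 hLd' hLn' (by filter_upwards [hgood] with ω h using h.2.1) ⟨𝔈.E0 L, ?_⟩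
    exact Filter.Frequently.of_forall fun n =>
      E0_mono hT (hLd' n) (hLn' n) hLd hLn0 (hLnle n)
  have hg2n : 0 ≤ᵐ[μ] g2 := by
    filter_upwards [hgood] with ω h using h.2.2.2.2
  have hE1 : ∀ n, 𝔈.E0 (Ln n) = 𝔈.E0 (𝔈.cond ρ (X (ρs n))) := by
    intro n
    rw [E0_cond hT hτ (hXd n) (hXn n), E0_cond hT hρ (hXd n) (hXn n)]
  have hE2 : Tendsto (fun n => 𝔈.E0 (𝔈.cond ρ (X (ρs n)))) atTop (nhds (𝔈.E0 (v ρ))) :=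
    E0_mct hT h6 h7 hfd hfn hfm hvd hvn (hgms.mono hρ.ms_le le_rfl) hgv hconv
  have hE3 : Tendsto (fun n => 𝔈.E0 (Ln n)) atTop (nhds (𝔈.E0 g2)) :=
    E0_mct hT h6 h7 hLd' hLn' hLm hg2D hg2n hg2m (Filter.EventuallyEq.refl _ _)
      (by filter_upwards [hgood] with ω h using ⟨h.1, h.2.1⟩)
  have hE4 : 𝔈.E0 g2 = 𝔈.E0 L := by
    have he : (fun n => 𝔈.E0 (Ln n)) = fun n => 𝔈.E0 (𝔈.cond ρ (X (ρs n))) := funext hE1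
    have h2 : Tendsto (fun n => 𝔈.E0 (Ln n)) atTop (nhds (𝔈.E0 (v ρ))) := by
      rw [he]
      exact hE2
    have h3 : 𝔈.E0 g2 = 𝔈.E0 (v ρ) := tendsto_nhds_unique hE3 h2
    rw [h3, hL, E0_cond hT hτ hvd hvn]
  have h01 := 𝔈.E0_eq hg2D hg2n
  have h02 := 𝔈.E0_eq hLd hLn0
  have heqc : 𝔈.cond (fun _ => 0) g2 =ᵐ[μ] 𝔈.cond (fun _ => 0) L := by
    filter_upwards [h01, h02] with ω e1 e2
    rw [e1, e2, hE4]
  have hfin := 𝔈.strict_mono (stop0_zero hT.le) hg2D hg2n hLd hLn0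
    (by filter_upwards [hgood] with ω h using h.2.2.1) heqc
  filter_upwards [hfin, hgood] with ω e h
  exact le_of_eq_of_le e.symm h.2.2.2.1

/-- one-sided consistency of the value family on `{τ = σ}`. -/
lemma v_consistent_le (hT : 0 < T) (h7 : 𝔈.PosHom) (hX : Admissible 𝔈 X)
    (hv : IsValueFam 𝔈 X v) {τ σ : Ω → ℝ} (hτ : Stop0 ℱ T τ) (hσ : Stop0 ℱ T σ) :
    ∀ᵐ ω ∂μ, τ ω = σ ω → v τ ω ≤ v σ ω := by
  classical
  set D : Set Ω := {ω | τ ω = σ ω} with hDdef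
  have hθstop : IsStoppingTime ℱ fun ω => ((min (τ ω) (σ ω) : ℝ) : WithTop ℝ) :=
    st_min hτ.1 hσ.1
  have hθ : Stop0 ℱ T fun ω => min (τ ω) (σ ω) :=
    ⟨hθstop, fun ω => le_min (hτ.2.1 ω) (hσ.2.1 ω),
      fun ω => (min_le_left _ _).trans (hτ.2.2 ω)⟩
  have hDτ : MeasurableSet[hτ.1.measurableSpace] D := by
    have h := hτ.1.measurableSet_eq_stopping_time hσ.1
    simpa only [WithTop.coe_eq_coe] using h
  have hDσ : MeasurableSet[hσ.1.measurableSpace] D := by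
    have h := hσ.1.measurableSet_eq_stopping_time hτ.1
    simp only [WithTop.coe_eq_coe] at h
    have e : {ω | σ ω = τ ω} = D := by
      ext ω; exact eq_comm
    rwa [e] at h
  have hDθ : MeasurableSet[hθ.1.measurableSpace] D := by
    rw [← ms_congr (hτ.1.min hσ.1) hθ.1 (funext fun ω => (WithTop.coe_min _ _).symm)]
    exact (IsStoppingTime.measurableSet_min_iff hτ.1 hσ.1 D).mpr ⟨hDτ, hDσ⟩
  have hsubτ : ∀ ω ∈ D, min (τ ω) (σ ω) = τ ω := fun ω h => min_eq_left (le_of_eq h)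
  have hsubσ : ∀ ω ∈ D, min (τ ω) (σ ω) = σ ω := fun ω h => min_eq_right (le_of_eq h.symm)
  have key : ∀ ρ, IsStopIn ℱ T τ ρ →
      𝔈.cond τ (X ρ) ≤ᵐ[μ] fun ω => if ω ∈ D then v σ ω else v τ ω := by
    intro ρ hρ
    have hρ0 : Stop0 ℱ T ρ := hρ.stop0 hτ
    set ρ' : Ω → ℝ := D.piecewise ρ (fun _ => T) with hρ'def
    have hρ'stop : IsStoppingTime ℱ (fun ω => (ρ' ω : WithTop ℝ)) :=
      glue_stop hθstop hρ.1 (isStoppingTime_const ℱ T)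
        (fun ω => (min_le_left _ _).trans (hρ.2.1 ω)) (fun ω => (min_le_right _ _).trans (hσ.2.2 ω)) hDθ
    have hρ'in : IsStopIn ℱ T σ ρ' := by
      refine ⟨hρ'stop, fun ω => ?_, fun ω => ?_⟩
      · by_cases hω : ω ∈ D
        · rw [hρ'def, Set.piecewise_eq_of_mem _ _ _ hω]
          have : τ ω = σ ω := hω
          exact this ▸ hρ.2.1 ω
        · rw [hρ'def, Set.piecewise_eq_of_notMem _ _ _ hω]
          exact hσ.2.2 ω
      · by_cases hω : ω ∈ D
        · rw [hρ'def, Set.piecewise_eq_of_mem _ _ _ hω]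
          exact hρ.2.2 ω
        · rw [hρ'def, Set.piecewise_eq_of_notMem _ _ _ hω]
    have hρ'0 : Stop0 ℱ T ρ' := hρ'in.stop0 hσ
    have e1 := cond_localize h7 hθ hτ (fun ω => min_le_left _ _) hDθ hsubτ
      (Xdom hX hρ0) (Xnn hX hρ0)
    have e2 := cond_ind_congr hθ hDθ (Xdom hX hρ0) (Xnn hX hρ0) (Xdom hX hρ'0)
      (Xnn hX hρ'0) (by
        filter_upwards [hX.2 ρ ρ' hρ0 hρ'0] with ω h hmem
        exact h (Set.piecewise_eq_of_mem _ _ _ hmem).symm)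
    have e3 := cond_localize h7 hθ hσ (fun ω => min_le_right _ _) hDθ hsubσ
      (Xdom hX hρ'0) (Xnn hX hρ'0)
    have e4 := condX_le_v hv hσ hρ'in
    have e5 := condX_le_v hv hτ hρ
    filter_upwards [e1, e2, e3, e4, e5] with ω e1 e2 e3 e4 e5
    by_cases hω : ω ∈ D
    · simp only [Set.indicator_of_mem hω] at e1 e2 e3
      have hch : 𝔈.cond τ (X ρ) ω ≤ v σ ω := by
        rw [← e1, e2, e3]
        exact e4
      simpa [hω] using hch
    · simpa [hω] using e5
  have hvh := (hv τ hτ).2 _ (by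
    rintro f ⟨ρ, hρ, rfl⟩
    exact key ρ hρ)
  filter_upwards [hvh] with ω h heq
  have hω : ω ∈ D := heq
  simpa [hω] using h

lemma v_consistent (hT : 0 < T) (h7 : 𝔈.PosHom) (hX : Admissible 𝔈 X)
    (hv : IsValueFam 𝔈 X v) {τ σ : Ω → ℝ} (hτ : Stop0 ℱ T τ) (hσ : Stop0 ℱ T σ) :
    ∀ᵐ ω ∂μ, τ ω = σ ω → v τ ω = v σ ω := by
  filter_upwards [v_consistent_le hT h7 hX hv hτ hσ, v_consistent_le hT h7 hX hv hσ hτ]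
    with ω h1 h2 heq
  exact le_antisymm (h1 heq) (h2 heq.symm)

/-- the set of `λ`-good stopping times after `κ`. -/
def lamSet (𝔈 : FExp μ T ℱ) (X v : (Ω → ℝ) → Ω → ℝ) (l : ℝ) (κ : Ω → ℝ) :
    Set (Ω → ℝ) :=
  {τ' | IsStopIn ℱ T κ τ' ∧ (fun ω => l * v τ' ω) ≤ᵐ[μ] X τ'}

lemma v_constT (hT : 0 < T) (h7 : 𝔈.PosHom) (hX : Admissible 𝔈 X)
    (hv : IsValueFam 𝔈 X v) : v (fun _ => T) =ᵐ[μ] X (fun _ => T) := by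
  have hTs : Stop0 ℱ T (fun _ => T) := stop0_const hT.le le_rfl
  have h2 : v (fun _ => T) ≤ᵐ[μ] X (fun _ => T) := by
    refine (hv _ hTs).2 _ ?_
    rintro f ⟨ρ, hρ, rfl⟩
    have hρT : ρ = fun _ => T := funext fun ω => le_antisymm (hρ.2.2 ω) (hρ.2.1 ω)
    rw [hρT]
    exact (cond_id h7 hTs (Xdom hX hTs) (Xnn hX hTs) (Xms hX hTs)).le
  exact ((X_le_v h7 hX hv hTs).antisymm h2).symm

lemma lamSet_constT (hT : 0 < T) (h7 : 𝔈.PosHom) (hX : Admissible 𝔈 X)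
    (hv : IsValueFam 𝔈 X v) {l : ℝ} (hl0 : 0 ≤ l) (hl1 : l ≤ 1) {κ : Ω → ℝ}
    (hκ : Stop0 ℱ T κ) : (fun _ => T) ∈ lamSet 𝔈 X v l κ := by
  refine ⟨⟨isStoppingTime_const ℱ T, fun ω => hκ.2.2 ω, fun ω => le_rfl⟩, ?_⟩
  filter_upwards [v_constT hT h7 hX hv, Xnn hX (stop0_const hT.le le_rfl),
    X_le_v h7 hX hv (stop0_const hT.le le_rfl)] with ω h1 h2 h3
  rw [h1]
  have h2x : (0:ℝ) ≤ X (fun _ => T) ω := h2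
  nlinarith [mul_nonneg (sub_nonneg.mpr hl1) h2x]

lemma lamSet_min (hT : 0 < T) (h7 : 𝔈.PosHom) (hX : Admissible 𝔈 X)
    (hv : IsValueFam 𝔈 X v) {l : ℝ} {κ τ σ : Ω → ℝ} (hκ : Stop0 ℱ T κ)
    (hτm : τ ∈ lamSet 𝔈 X v l κ) (hσm : σ ∈ lamSet 𝔈 X v l κ) :
    (fun ω => min (τ ω) (σ ω)) ∈ lamSet 𝔈 X v l κ := by
  have hτ0 : Stop0 ℱ T τ := hτm.1.stop0 hκ
  have hσ0 : Stop0 ℱ T σ := hσm.1.stop0 hκ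
  have hmin : Stop0 ℱ T (fun ω => min (τ ω) (σ ω)) :=
    ⟨st_min hτ0.1 hσ0.1, fun ω => le_min (hτ0.2.1 ω) (hσ0.2.1 ω),
      fun ω => (min_le_left _ _).trans (hτ0.2.2 ω)⟩
  refine ⟨⟨hmin.1, fun ω => le_min (hτm.1.2.1 ω) (hσm.1.2.1 ω),
    fun ω => (min_le_left _ _).trans (hτm.1.2.2 ω)⟩, ?_⟩
  have hc1 := v_consistent hT h7 hX hv hmin hτ0
  have hc2 := v_consistent hT h7 hX hv hmin hσ0
  have hx1 := hX.2 _ τ hmin hτ0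
  have hx2 := hX.2 _ σ hmin hσ0
  filter_upwards [hc1, hc2, hx1, hx2, hτm.2, hσm.2] with ω c1 c2 x1 x2 m1 m2
  rcases le_total (τ ω) (σ ω) with h | h
  · have he : min (τ ω) (σ ω) = τ ω := min_eq_left h
    have hc := c1 he
    have hxx := x1 he
    rw [hc, hxx]
    exact m1
  · have he : min (τ ω) (σ ω) = σ ω := min_eq_right h
    have hc := c2 he
    have hxx := x2 he
    rw [hc, hxx]
    exact m2

/-- attainment (a.e.) of the essential infimum of the `λ`-good stopping times. -/
lemma exists_lam_inf (hT : 0 < T) (h7 : 𝔈.PosHom) (hX : Admissible 𝔈 X)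
    (hv : IsValueFam 𝔈 X v) (hrcf : RightContinuousFiltration ℱ) {l : ℝ}
    (hl0 : 0 ≤ l) (hl1 : l ≤ 1) {κ : Ω → ℝ} (hκ : Stop0 ℱ T κ) :
    ∃ (τstar : Ω → ℝ) (τs : ℕ → Ω → ℝ),
      (∀ n, τs n ∈ lamSet 𝔈 X v l κ) ∧ (∀ ω, Antitone fun n => τs n ω) ∧
      (∀ n ω, τstar ω ≤ τs n ω) ∧
      (∀ ω, Tendsto (fun n => τs n ω) atTop (nhds (τstar ω))) ∧
      IsStopIn ℱ T κ τstar ∧ ∀ τ' ∈ lamSet 𝔈 X v l κ, τstar ≤ᵐ[μ] τ' := by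
  classical
  set Int : (Ω → ℝ) → ℝ := fun ρ => ∫ ω, arctan (ρ ω) ∂μ with hInt
  set B : Set ℝ := {x | ∃ ρ ∈ lamSet 𝔈 X v l κ, x = Int ρ} with hB
  have hBne : B.Nonempty :=
    ⟨Int (fun _ => T), ⟨fun _ => T, lamSet_constT hT h7 hX hv hl0 hl1 hκ, rfl⟩⟩
  have hnn_mem : ∀ {ρ : Ω → ℝ}, ρ ∈ lamSet 𝔈 X v l κ → ∀ ω, 0 ≤ ρ ω := fun {ρ} hρ ω =>
    (hκ.2.1 ω).trans (hρ.1.2.1 ω)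
  have hBbdd : BddBelow B := ⟨0, by
    rintro x ⟨ρ, hρ, rfl⟩
    refine integral_nonneg fun ω => ?_
    have := Real.arctan_strictMono.monotone (hnn_mem hρ ω)
    simpa using this⟩
  set β := sInf B with hβ
  have hchoose : ∀ n : ℕ, ∃ ρ, ρ ∈ lamSet 𝔈 X v l κ ∧ Int ρ < β + 1 / (n + 1) := by
    intro n
    have hlt : β < β + 1 / ((n:ℝ) + 1) := by
      have : (0:ℝ) < 1 / ((n:ℝ) + 1) := by positivity
      linarith
    obtain ⟨x, hx, hlt2⟩ := exists_lt_of_csInf_lt hBne hlt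
    obtain ⟨ρ, hρ, rfl⟩ := hx
    exact ⟨ρ, hρ, hlt2⟩
  choose ρ' hρ'1 hρ'2 using hchoose
  set Q : ℕ → {p : Ω → ℝ // p ∈ lamSet 𝔈 X v l κ} := fun n =>
    Nat.rec ⟨ρ' 0, hρ'1 0⟩ (fun k ih =>
      ⟨fun ω => min (ih.1 ω) (ρ' (k + 1) ω),
        lamSet_min hT h7 hX hv hκ ih.2 (hρ'1 (k + 1))⟩) n with hQ
  set τs : ℕ → Ω → ℝ := fun n => (Q n).1 with hτs
  have hmem : ∀ n, τs n ∈ lamSet 𝔈 X v l κ := fun n => (Q n).2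
  have hsucc : ∀ n ω, τs (n + 1) ω = min (τs n ω) (ρ' (n + 1) ω) := fun n ω => rfl
  have hanti : ∀ ω, Antitone fun n => τs n ω := fun ω => antitone_nat_of_succ_le fun n => by
    rw [hsucc]
    exact min_le_left _ _
  have hle' : ∀ n ω, τs n ω ≤ ρ' n ω := by
    intro n ω
    cases n with
    | zero => exact le_rfl
    | succ k =>
      rw [hsucc]
      exact min_le_right _ _
  have hnn : ∀ n ω, 0 ≤ τs n ω := fun n ω => hnn_mem (hmem n) ω
  set τstar : Ω → ℝ := fun ω => ⨅ n, τs n ω with hτstar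
  have hbdd : ∀ ω, BddBelow (Set.range fun n => τs n ω) := fun ω => ⟨0, by
    rintro x ⟨n, rfl⟩
    exact hnn n ω⟩
  have htend : ∀ ω, Tendsto (fun n => τs n ω) atTop (nhds (τstar ω)) := fun ω =>
    tendsto_atTop_ciInf (hanti ω) (hbdd ω)
  have hstarle : ∀ n ω, τstar ω ≤ τs n ω := fun n ω => ciInf_le (hbdd ω) n
  have hκle : ∀ ω, κ ω ≤ τstar ω := fun ω => le_ciInf fun n => (hmem n).1.2.1 ω
  have hTle : ∀ ω, τstar ω ≤ T := fun ω => (hstarle 0 ω).trans ((hmem 0).1.2.2 ω)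
  have hstarstop : IsStoppingTime ℱ (fun ω => (τstar ω : WithTop ℝ)) :=
    inf_stop hrcf (fun n => (hmem n).1.1) hnn
  have hstar0 : Stop0 ℱ T τstar :=
    ⟨hstarstop, fun ω => (hκ.2.1 ω).trans (hκle ω), hTle⟩
  have hstarmeas : Measurable τstar := hstar0.meas
  have hτsmeas : ∀ n, Measurable (τs n) := fun n => ((hmem n).1.stop0 hκ).meas
  have hIconv : Tendsto (fun n => Int (τs n)) atTop (nhds (Int τstar)) := by
    refine tendsto_integral_of_dominated_convergence (fun _ => π / 2)
      (fun n => (Real.measurable_arctan.comp (hτsmeas n)).aestronglyMeasurable)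
      (integrable_const _) (fun n => Filter.Eventually.of_forall fun ω => ?_) ?_
    · rw [Real.norm_eq_abs, abs_le]
      exact ⟨(Real.neg_pi_div_two_lt_arctan _).le, (Real.arctan_lt_pi_div_two _).le⟩
    · exact Filter.Eventually.of_forall fun ω =>
        (Real.continuous_arctan.tendsto _).comp (htend ω)
  have hIβ : Int τstar = β := by
    have hge1 : β ≤ Int τstar :=
      ge_of_tendsto hIconv (Filter.Eventually.of_forall fun n =>
        csInf_le hBbdd ⟨_, hmem n, rfl⟩)
    have hle1 : Int τstar ≤ β := by
      have h2 : Tendsto (fun n : ℕ => β + 1 / ((n:ℝ) + 1)) atTop (nhds β) := by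
        have := tendsto_one_div_add_atTop_nhds_zero_nat (𝕜 := ℝ)
        have h3 := tendsto_const_nhds (x := β) (f := atTop (α := ℕ)) |>.add this
        simpa using h3
      refine le_of_tendsto_of_tendsto' hIconv h2 fun n => ?_
      refine le_trans ?_ (hρ'2 n).le
      exact arctan_int_mono (hτsmeas n) (((hρ'1 n).1.stop0 hκ).meas)
        (Filter.Eventually.of_forall fun ω => hle' n ω)
    linarith
  refine ⟨τstar, τs, hmem, hanti, hstarle, htend, ⟨hstarstop, hκle, hTle⟩, ?_⟩
  intro τ' hτ'
  have hτ'meas : Measurable τ' := (hτ'.1.stop0 hκ).meas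
  have hmin_mem : ∀ n, (fun ω => min (τs n ω) (τ' ω)) ∈ lamSet 𝔈 X v l κ := fun n =>
    lamSet_min hT h7 hX hv hκ (hmem n) hτ'
  have hconv2 : Tendsto (fun n => Int (fun ω => min (τs n ω) (τ' ω))) atTop
      (nhds (Int (fun ω => min (τstar ω) (τ' ω)))) := by
    refine tendsto_integral_of_dominated_convergence (fun _ => π / 2)
      (fun n => (Real.measurable_arctan.comp ((hτsmeas n).min hτ'meas)).aestronglyMeasurable)
      (integrable_const _) (fun n => Filter.Eventually.of_forall fun ω => ?_) ?_
    · rw [Real.norm_eq_abs, abs_le]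
      exact ⟨(Real.neg_pi_div_two_lt_arctan _).le, (Real.arctan_lt_pi_div_two _).le⟩
    · exact Filter.Eventually.of_forall fun ω =>
        (Real.continuous_arctan.tendsto _).comp ((htend ω).min tendsto_const_nhds)
  have h2 : β ≤ Int (fun ω => min (τstar ω) (τ' ω)) :=
    ge_of_tendsto hconv2 (Filter.Eventually.of_forall fun n =>
      csInf_le hBbdd ⟨_, hmin_mem n, rfl⟩)
  have heq := ae_eq_of_arctan_int (hstarmeas.min hτ'meas) hstarmeas
    (Filter.Eventually.of_forall fun ω => min_le_left _ _) (hIβ.trans_le h2)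
  filter_upwards [heq] with ω h
  exact min_eq_left_iff.mp h

end Families

end AuxLemmas

/-- `τ^λ(S)` is `(1-λ)`-optimal: `λ E[v(S)] ≤ E[X(τ^λ(S))]`. -/
theorem essInf_lambda_almost_optimal [IsProbabilityMeasure μ] (hT : 0 < T)
    (hcf : CompleteFiltration μ ℱ) (hrcf : RightContinuousFiltration ℱ)
    (𝔈 : FExp μ T ℱ) (h6 : 𝔈.Subadditive) (h7 : 𝔈.PosHom)
    (X v : (Ω → ℝ) → Ω → ℝ) (hX : Admissible 𝔈 X) (hXce : CE 𝔈 X)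
    (hbdd : BddRewardE0 𝔈 X) (hv : IsValueFam 𝔈 X v)
    (S : Ω → ℝ) (hS : Stop0 ℱ T S) (l : ℝ) (hl : l ∈ Set.Ioo (0 : ℝ) 1)
    (tl : Ω → ℝ) (htl_bd : ∀ ω, S ω ≤ tl ω ∧ tl ω ≤ T)
    (htl : IsEssInfFam μ
      {τ | IsStopIn ℱ T S τ ∧ (fun ω => l * v τ ω) ≤ᵐ[μ] X τ} tl) :
    l * 𝔈.E0 (v S) ≤ 𝔈.E0 (X tl) := by
  classical
  obtain ⟨hl0, hl1⟩ := hl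
  obtain ⟨τstar, τs0, hτsA, hτs_anti, hτstar_le, hτs_tend, hτstar_in, hτstar_min⟩ :=
    exists_lam_inf hT h7 hX hv hrcf hl0.le hl1.le hS
  have htl_le : tl ≤ᵐ[μ] τstar := by
    have h1 : ∀ n, tl ≤ᵐ[μ] τs0 n := fun n => htl.1 _ (hτsA n)
    filter_upwards [ae_all_iff.mpr h1] with ω h
    exact ge_of_tendsto (hτs_tend ω) (Filter.Eventually.of_forall fun n => h n)
  have hstar_le_tl : τstar ≤ᵐ[μ] tl := htl.2 τstar fun τ' hτ' => hτstar_min τ' hτ'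
  have htl_eq : tl =ᵐ[μ] τstar := htl_le.antisymm hstar_le_tl
  have htl_stop : IsStoppingTime ℱ (fun ω => (tl ω : WithTop ℝ)) := stop_of_ae_eq hcf hτstar_in.1 htl_eq
  have htl0 : Stop0 ℱ T tl :=
    ⟨htl_stop, fun ω => (hS.2.1 ω).trans (htl_bd ω).1, fun ω => (htl_bd ω).2⟩
  have htlS_le : ∀ ω, S ω ≤ tl ω := fun ω => (htl_bd ω).1
  -- the "hat" minimizing sequence, made pointwise ≥ tl
  set σn : ℕ → Ω → ℝ := fun n ω => max (τs0 n ω) (tl ω) with hσndef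
  have hτs0_stop : ∀ n, Stop0 ℱ T (τs0 n) := fun n => (hτsA n).1.stop0 hS
  have hσn_stop : ∀ n, Stop0 ℱ T (σn n) := fun n =>
    ⟨st_max (hτs0_stop n).1 htl_stop, fun ω => le_max_of_le_left ((hτs0_stop n).2.1 ω),
      fun ω => max_le ((hτs0_stop n).2.2 ω) (htl_bd ω).2⟩
  have hσn_eq : ∀ n, σn n =ᵐ[μ] τs0 n := fun n => by
    filter_upwards [htl_le] with ω h
    exact max_eq_left (h.trans (hτstar_le n ω))
  have hσn_ge : ∀ n ω, tl ω ≤ σn n ω := fun n ω => le_max_right _ _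
  have hσn_geS : ∀ n ω, S ω ≤ σn n ω := fun n ω => (htlS_le ω).trans (hσn_ge n ω)
  have hσn_anti : ∀ ω, Antitone fun n => σn n ω := fun ω a b hab =>
    max_le_max (hτs_anti ω hab) le_rfl
  have hσn_tend : ∀ᵐ ω ∂μ, Tendsto (fun n => σn n ω) atTop (nhds (tl ω)) := by
    filter_upwards [htl_eq] with ω h
    have h2 := (hτs_tend ω).max (tendsto_const_nhds (x := tl ω))
    have e : max (τstar ω) (tl ω) = tl ω := by
      rw [h]
      exact max_self _
    rwa [e] at h2
  have hσnA : ∀ n, σn n ∈ lamSet 𝔈 X v l S := by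
    intro n
    refine ⟨⟨(hσn_stop n).1, hσn_geS n, fun ω => max_le ((hτsA n).1.2.2 ω) (htl_bd ω).2⟩, ?_⟩
    filter_upwards [hσn_eq n, v_consistent hT h7 hX hv (hσn_stop n) (hτs0_stop n),
      hX.2 (σn n) (τs0 n) (hσn_stop n) (hτs0_stop n), (hτsA n).2] with ω e c x hlam
    have hc := c e
    have hx := x e
    rw [hc, hx]
    exact hlam
  have hvDOM : ∀ {ρ : Ω → ℝ}, Stop0 ℱ T ρ → v ρ ∈ 𝔈.Dom := fun {ρ} h =>
    v_dom hT h7 hX hv hbdd h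
  have hvNN : ∀ {ρ : Ω → ℝ}, Stop0 ℱ T ρ → 0 ≤ᵐ[μ] v ρ := fun {ρ} h => v_nn h7 hX hv h
  -- part (F3): `l * E0 (v tl) ≤ E0 (X tl)`
  set a : ℕ → ℝ := fun n => 𝔈.E0 (v (σn n)) with hadef
  have key1 : ∀ n, l * a n ≤ 𝔈.E0 (X (σn n)) := by
    intro n
    have hmem := smul_mem hl0.le hl1.le (hvDOM (hσn_stop n)) (hvNN (hσn_stop n))
    have h1 := E0_mono hT hmem (smul_nonneg' hl0.le (hvNN (hσn_stop n)))
      (Xdom hX (hσn_stop n)) (Xnn hX (hσn_stop n)) (hσnA n).2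
    rwa [E0_smul hT h7 hl0.le (hvDOM (hσn_stop n)) (hvNN (hσn_stop n)) hmem] at h1
  have hXconv : Tendsto (fun n => 𝔈.E0 (X (σn n))) atTop (nhds (𝔈.E0 (X tl))) := by
    refine hXce.1 tl htl0 σn hσn_stop ?_
    filter_upwards [hσn_tend] with ω h
    exact ⟨hσn_anti ω, h⟩
  have hub : ∀ n, a n ≤ 𝔈.E0 (v tl) := by
    intro n
    have h1 : 𝔈.cond tl (v (σn n)) ≤ᵐ[μ] v tl :=
      v_supermart hT h6 h7 hX hv hbdd htl0 (hσn_stop n) (hσn_ge n)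
    calc a n = 𝔈.E0 (𝔈.cond tl (v (σn n))) :=
          (E0_cond hT htl0 (hvDOM (hσn_stop n)) (hvNN (hσn_stop n))).symm
      _ ≤ 𝔈.E0 (v tl) := E0_mono hT
          (𝔈.cond_mem htl0 (hvDOM (hσn_stop n)) (hvNN (hσn_stop n)))
          (𝔈.cond_nonneg htl0 (hvDOM (hσn_stop n)) (hvNN (hσn_stop n)))
          (hvDOM htl0) (hvNN htl0) h1
  have hmono_a : Monotone a := by
    refine monotone_nat_of_le_succ fun n => ?_
    have hle : ∀ ω, σn (n+1) ω ≤ σn n ω := fun ω => hσn_anti ω (Nat.le_succ n)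
    have h1 : 𝔈.cond (σn (n+1)) (v (σn n)) ≤ᵐ[μ] v (σn (n+1)) :=
      v_supermart hT h6 h7 hX hv hbdd (hσn_stop (n+1)) (hσn_stop n) hle
    calc a n = 𝔈.E0 (𝔈.cond (σn (n+1)) (v (σn n))) :=
          (E0_cond hT (hσn_stop (n+1)) (hvDOM (hσn_stop n)) (hvNN (hσn_stop n))).symm
      _ ≤ a (n+1) := E0_mono hT
          (𝔈.cond_mem (hσn_stop (n+1)) (hvDOM (hσn_stop n)) (hvNN (hσn_stop n)))
          (𝔈.cond_nonneg (hσn_stop (n+1)) (hvDOM (hσn_stop n)) (hvNN (hσn_stop n)))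
          (hvDOM (hσn_stop (n+1))) (hvNN (hσn_stop (n+1))) h1
  have hbdd_a : BddAbove (Set.range a) := ⟨𝔈.E0 (v tl), by
    rintro x ⟨n, rfl⟩
    exact hub n⟩
  have ha_tends : Tendsto a atTop (nhds (⨆ n, a n)) := tendsto_atTop_ciSup hmono_a hbdd_a
  have hsup_ge : 𝔈.E0 (v tl) ≤ ⨆ n, a n := by
    refine E0_v_le hT h6 h7 hX hv hbdd htl0 ?_
    intro ρ hρ
    set ρn : ℕ → Ω → ℝ := fun n ω => max (ρ ω) (σn n ω) with hρndef
    have hρ0 : Stop0 ℱ T ρ := hρ.stop0 htl0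
    have hρn_stop : ∀ n, Stop0 ℱ T (ρn n) := fun n =>
      ⟨st_max hρ0.1 (hσn_stop n).1, fun ω => le_max_of_le_left (hρ0.2.1 ω),
        fun ω => max_le (hρ0.2.2 ω) ((hσn_stop n).2.2 ω)⟩
    have hconv : Tendsto (fun n => 𝔈.E0 (X (ρn n))) atTop (nhds (𝔈.E0 (X ρ))) := by
      refine hXce.1 ρ hρ0 ρn hρn_stop ?_
      filter_upwards [hσn_tend] with ω h
      refine ⟨fun a' b' hab => max_le_max le_rfl (hσn_anti ω hab), ?_⟩
      have h2 := (tendsto_const_nhds (x := ρ ω)).max h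
      have e : max (ρ ω) (tl ω) = ρ ω := max_eq_left (hρ.2.1 ω)
      rwa [e] at h2
    refine le_of_tendsto hconv (Filter.Eventually.of_forall fun n => ?_)
    have hin : IsStopIn ℱ T (σn n) (ρn n) :=
      ⟨(hρn_stop n).1, fun ω => le_max_right _ _, (hρn_stop n).2.2⟩
    have h1 : 𝔈.cond (σn n) (X (ρn n)) ≤ᵐ[μ] v (σn n) := condX_le_v hv (hσn_stop n) hin
    calc 𝔈.E0 (X (ρn n)) = 𝔈.E0 (𝔈.cond (σn n) (X (ρn n))) :=
          (E0_cond hT (hσn_stop n) (Xdom hX (hρn_stop n)) (Xnn hX (hρn_stop n))).symm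
      _ ≤ a n := E0_mono hT
          (𝔈.cond_mem (hσn_stop n) (Xdom hX (hρn_stop n)) (Xnn hX (hρn_stop n)))
          (𝔈.cond_nonneg (hσn_stop n) (Xdom hX (hρn_stop n)) (Xnn hX (hρn_stop n)))
          (hvDOM (hσn_stop n)) (hvNN (hσn_stop n)) h1
      _ ≤ ⨆ n, a n := le_ciSup hbdd_a n
  have hsup_eq : (⨆ n, a n) = 𝔈.E0 (v tl) := le_antisymm (ciSup_le hub) hsup_ge
  have haconv : Tendsto a atTop (nhds (𝔈.E0 (v tl))) := by
    rw [← hsup_eq]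
    exact ha_tends
  have F3 : l * 𝔈.E0 (v tl) ≤ 𝔈.E0 (X tl) :=
    le_of_tendsto_of_tendsto' (haconv.const_mul l) hXconv key1
  -- part (F1): `v S ≤ E_S[v tl]` via the penalized supermartingale
  have key2 : ∀ ρ, IsStopIn ℱ T S ρ → 𝔈.cond S (X ρ) ≤ᵐ[μ]
      fun ω => l * v S ω + (1 - l) * 𝔈.cond S (v tl) ω := by
    intro ρ hρin
    have hρ : Stop0 ℱ T ρ := hρin.stop0 hS
    obtain ⟨πstar, πs, hπsA, _, hπ_le, hπ_tend, hπ_in, hπ_min⟩ :=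
      exists_lam_inf hT h7 hX hv hrcf hl0.le hl1.le hρ
    have hπs_in_S : ∀ n, πs n ∈ lamSet 𝔈 X v l S := fun n =>
      ⟨⟨(hπsA n).1.1, fun ω => (hρin.2.1 ω).trans ((hπsA n).1.2.1 ω), (hπsA n).1.2.2⟩,
        (hπsA n).2⟩
    have htl_le_π : tl ≤ᵐ[μ] πstar := by
      have h1 : ∀ n, tl ≤ᵐ[μ] πs n := fun n => htl.1 _ (hπs_in_S n)
      filter_upwards [ae_all_iff.mpr h1] with ω h
      exact ge_of_tendsto (hπ_tend ω) (Filter.Eventually.of_forall fun n => h n)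
    set π : Ω → ℝ := fun ω => max (πstar ω) (tl ω) with hπdef
    have hπstar0 : Stop0 ℱ T πstar := hπ_in.stop0 hρ
    have hπ0 : Stop0 ℱ T π := ⟨st_max hπstar0.1 htl_stop,
      fun ω => le_max_of_le_left (hπstar0.2.1 ω),
      fun ω => max_le (hπstar0.2.2 ω) (htl_bd ω).2⟩
    have hπ_ge_tl : ∀ ω, tl ω ≤ π ω := fun ω => le_max_right _ _
    have hπ_ge_ρ : ∀ ω, ρ ω ≤ π ω := fun ω => le_max_of_le_left (hπ_in.2.1 ω)
    obtain ⟨ρs', g, hρs', hconv', hgms, hgD, hgv⟩ := exists_rep hT h7 hX hv hbdd hρ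
    have hgnn : 0 ≤ᵐ[μ] g := by
      filter_upwards [hgv, hvNN hρ] with ω e h
      exact h.trans_eq e.symm
    set Cs : Set Ω := {ω | l * g ω ≤ X ρ ω} with hCsdef
    have hCsm : MeasurableSet[hρ.1.measurableSpace] Cs :=
      measurableSet_le (hgms.const_mul l) (Xms hX hρ)
    set ρ'' : Ω → ℝ := Cs.piecewise ρ (fun _ => T) with hρ''def
    have hρ''stop : IsStoppingTime ℱ (fun ω => (ρ'' ω : WithTop ℝ)) :=
      glue_stop hρ.1 hρ.1 (isStoppingTime_const ℱ T) (fun ω => le_rfl) hρ.2.2 hCsm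
    have hρ''in : IsStopIn ℱ T ρ ρ'' := by
      refine ⟨hρ''stop, fun ω => ?_, fun ω => ?_⟩
      · by_cases hω : ω ∈ Cs
        · rw [hρ''def, Set.piecewise_eq_of_mem _ _ _ hω]
        · rw [hρ''def, Set.piecewise_eq_of_notMem _ _ _ hω]
          exact hρ.2.2 ω
      · by_cases hω : ω ∈ Cs
        · rw [hρ''def, Set.piecewise_eq_of_mem _ _ _ hω]
          exact hρ.2.2 ω
        · rw [hρ''def, Set.piecewise_eq_of_notMem _ _ _ hω]
    have hρ''0 : Stop0 ℱ T ρ'' := hρ''in.stop0 hρ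
    have hρ''mem : ρ'' ∈ lamSet 𝔈 X v l ρ := by
      refine ⟨hρ''in, ?_⟩
      filter_upwards [hgv, v_consistent hT h7 hX hv hρ''0 hρ,
        v_consistent hT h7 hX hv hρ''0 (stop0_const hT.le le_rfl),
        hX.2 ρ'' ρ hρ''0 hρ, hX.2 ρ'' (fun _ => T) hρ''0 (stop0_const hT.le le_rfl),
        v_constT hT h7 hX hv, Xnn hX (stop0_const hT.le le_rfl)]
        with ω egv c1 c2 x1 x2 evT hxT
      by_cases hω : ω ∈ Cs
      · have e : ρ'' ω = ρ ω := Set.piecewise_eq_of_mem _ _ _ hω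
        have hc := c1 e
        have hx := x1 e
        rw [hc, hx, ← egv]
        exact hω
      · have e : ρ'' ω = T := Set.piecewise_eq_of_notMem _ _ _ hω
        have hc := c2 e
        have hx := x2 e
        rw [hc, hx, evT]
        have h2x : (0:ℝ) ≤ X (fun _ => T) ω := hxT
        nlinarith [mul_nonneg (sub_nonneg.mpr hl1.le) h2x]
    have hπ_le_ρ'' : πstar ≤ᵐ[μ] ρ'' := hπ_min _ hρ''mem
    have hπρ : ∀ᵐ ω ∂μ, ω ∈ Cs → π ω = ρ ω := by
      filter_upwards [hπ_le_ρ'', htl_le_π] with ω h1 h2 hmem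
      have e : ρ'' ω = ρ ω := Set.piecewise_eq_of_mem _ _ _ hmem
      rw [e] at h1
      exact le_antisymm (max_le h1 (h2.trans h1)) (hπ_ge_ρ ω)
    set W : Ω → ℝ := 𝔈.cond ρ (v π) with hWdef
    have hWD := 𝔈.cond_mem hρ (hvDOM hπ0) (hvNN hπ0)
    have hWn := 𝔈.cond_nonneg hρ (hvDOM hπ0) (hvNN hπ0)
    have loc1 : Cs.indicator W =ᵐ[μ] Cs.indicator (𝔈.cond ρ g) := by
      refine cond_ind_congr hρ hCsm (hvDOM hπ0) (hvNN hπ0) hgD hgnn ?_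
      filter_upwards [hπρ, v_consistent hT h7 hX hv hπ0 hρ, hgv] with ω h c egv hmem
      have hc := c (h hmem)
      rw [hc]
      exact egv.symm
    have loc2 : 𝔈.cond ρ g =ᵐ[μ] g := cond_id h7 hρ hgD hgnn hgms
    have claim1 : X ρ ≤ᵐ[μ] fun ω => l * v ρ ω + (1 - l) * W ω := by
      filter_upwards [loc1, loc2, hgv, X_le_v h7 hX hv hρ, hWn] with ω e1 e2 egv hXv hWω
      by_cases hc : ω ∈ Cs
      · have hWval : W ω = v ρ ω := by
          have h1 : Cs.indicator W ω = Cs.indicator (𝔈.cond ρ g) ω := e1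
          rw [Set.indicator_of_mem hc, Set.indicator_of_mem hc] at h1
          rw [h1, e2, egv]
        rw [hWval]
        nlinarith [hXv]
      · have hlt : X ρ ω < l * g ω := lt_of_not_ge hc
        rw [egv] at hlt
        have hWnn : (0:ℝ) ≤ W ω := hWω
        nlinarith [mul_nonneg (sub_nonneg.mpr hl1.le) hWnn]
    have hφ₁D : (fun ω => l * v ρ ω) ∈ 𝔈.Dom := smul_mem hl0.le hl1.le (hvDOM hρ) (hvNN hρ)
    have hφ₁n : 0 ≤ᵐ[μ] fun ω => l * v ρ ω := smul_nonneg' hl0.le (hvNN hρ)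
    have hφ₂D : (fun ω => (1 - l) * W ω) ∈ 𝔈.Dom :=
      smul_mem (by linarith) (by linarith) hWD hWn
    have hφ₂n : 0 ≤ᵐ[μ] fun ω => (1 - l) * W ω := smul_nonneg' (by linarith) hWn
    have hsum_eq : (fun ω => l * v ρ ω + (1 - l) * W ω)
        = (fun ω => l * v ρ ω) + fun ω => (1 - l) * W ω := rfl
    have hsumD : (fun ω => l * v ρ ω + (1 - l) * W ω) ∈ 𝔈.Dom := by
      rw [hsum_eq]
      exact 𝔈.add_mem hφ₁D hφ₂D
    have hsumn : 0 ≤ᵐ[μ] fun ω => l * v ρ ω + (1 - l) * W ω := by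
      filter_upwards [hφ₁n, hφ₂n] with ω h1 h2
      exact add_nonneg h1 h2
    have m1 := 𝔈.mono hS (Xdom hX hρ) (Xnn hX hρ) hsumD hsumn claim1
    have m2 : 𝔈.cond S (fun ω => l * v ρ ω + (1 - l) * W ω) ≤ᵐ[μ]
        𝔈.cond S (fun ω => l * v ρ ω) + 𝔈.cond S (fun ω => (1 - l) * W ω) := by
      have h := h6 hS hφ₁D hφ₁n hφ₂D hφ₂n
      rwa [← hsum_eq] at h
    have m3 := h7 l hl0.le hS (hvDOM hρ) (hvNN hρ)
    have m4 := h7 (1 - l) (by linarith) hS hWD hWn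
    have m5 : 𝔈.cond S (v ρ) ≤ᵐ[μ] v S :=
      v_supermart hT h6 h7 hX hv hbdd hS hρ hρin.2.1
    have m6 : 𝔈.cond S W =ᵐ[μ] 𝔈.cond S (v π) :=
      𝔈.time_consistent hS hρ hρin.2.1 (hvDOM hπ0) (hvNN hπ0)
    have m7 : 𝔈.cond S (v π) =ᵐ[μ] 𝔈.cond S (𝔈.cond tl (v π)) :=
      (𝔈.time_consistent hS htl0 htlS_le (hvDOM hπ0) (hvNN hπ0)).symm
    have m8 : 𝔈.cond tl (v π) ≤ᵐ[μ] v tl :=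
      v_supermart hT h6 h7 hX hv hbdd htl0 hπ0 hπ_ge_tl
    have m9 : 𝔈.cond S (𝔈.cond tl (v π)) ≤ᵐ[μ] 𝔈.cond S (v tl) :=
      𝔈.mono hS (𝔈.cond_mem htl0 (hvDOM hπ0) (hvNN hπ0))
        (𝔈.cond_nonneg htl0 (hvDOM hπ0) (hvNN hπ0)) (hvDOM htl0) (hvNN htl0) m8
    filter_upwards [m1, m2, m3, m4, m5, m6, m7, m9] with ω m1 m2 m3 m4 m5 m6 m7 m9
    have hsum_pt : 𝔈.cond S (fun ω => l * v ρ ω) ω + 𝔈.cond S (fun ω => (1 - l) * W ω) ω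
        ≤ l * v S ω + (1 - l) * 𝔈.cond S (v tl) ω := by
      rw [m3, m4]
      have e1 : l * 𝔈.cond S (v ρ) ω ≤ l * v S ω := mul_le_mul_of_nonneg_left m5 hl0.le
      have e2 : (1 - l) * 𝔈.cond S W ω ≤ (1 - l) * 𝔈.cond S (v tl) ω := by
        refine mul_le_mul_of_nonneg_left ?_ (by linarith)
        rw [m6, m7]
        exact m9
      linarith
    have hm2' : 𝔈.cond S (fun ω => l * v ρ ω + (1 - l) * W ω) ω ≤
        𝔈.cond S (fun ω => l * v ρ ω) ω + 𝔈.cond S (fun ω => (1 - l) * W ω) ω := m2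
    have hfin : 𝔈.cond S (X ρ) ω ≤ l * v S ω + (1 - l) * 𝔈.cond S (v tl) ω :=
      le_trans m1 (le_trans hm2' hsum_pt)
    exact hfin
  have hvS_le := (hv S hS).2 _ (by
    rintro f ⟨ρ, hρ, rfl⟩
    exact key2 ρ hρ)
  have F1 : v S ≤ᵐ[μ] 𝔈.cond S (v tl) := by
    filter_upwards [hvS_le] with ω h
    have h' : v S ω ≤ l * v S ω + (1 - l) * 𝔈.cond S (v tl) ω := h
    have h2 : (1 - l) * v S ω ≤ (1 - l) * 𝔈.cond S (v tl) ω := by ring_nf; nlinarith [h']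
    exact le_of_mul_le_mul_left (by linarith [h2]) (show (0:ℝ) < 1 - l by linarith)
  have F2 : 𝔈.E0 (v S) ≤ 𝔈.E0 (v tl) := by
    have h1 := E0_mono hT (hvDOM hS) (hvNN hS)
      (𝔈.cond_mem hS (hvDOM htl0) (hvNN htl0)) (𝔈.cond_nonneg hS (hvDOM htl0) (hvNN htl0)) F1
    rwa [E0_cond hT hS (hvDOM htl0) (hvNN htl0)] at h1
  calc l * 𝔈.E0 (v S) ≤ l * 𝔈.E0 (v tl) := mul_le_mul_of_nonneg_left F2 hl0.le
    _ ≤ 𝔈.E0 (X tl) := F3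

end OptMultStop
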